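/- arXiv:2504.01713 — 6 statements merged into one kernel-verified Lean document; each statement's English description precedes it below -/
import Mathlib

section
/- Let d ≥ 2 and let S be a set of 2n distinct points in ℝ^d (n ≥ 1). Let x ∈ S and let K be an affine subspace of ℝ^d of dimension d−2 with x ∈ K. Then there exists a perfect hyperplane H with K ⊆ H, i.e. an affine hyperplane H containing K such that each of its two open sides contains fewer than n points of S. -/
open scoped RealInnerProductSpace
local notation "π" => Real.pi

/-- let `d ≥ 2`, `S` a set of `2n` points in `ℝ^d`, `x ∈ S`, and `K` an affine
subspace of dimension `d - 2` with `x ∈ K`.  Then there is a perfect hyperplane containing `K`: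
a hyperplane `{y | ⟪y,c⟫ = lam} ⊇ K` each of whose open sides contains fewer than `n`
points of `S`. -/
theorem stmt13 (d : ℕ) (hd : 2 ≤ d) (n : ℕ) (hn : 1 ≤ n)
    (S : Finset (EuclideanSpace ℝ (Fin d))) (hcard : S.card = 2 * n)
    (x : EuclideanSpace ℝ (Fin d)) (hx : x ∈ S)
    (K : AffineSubspace ℝ (EuclideanSpace ℝ (Fin d)))
    (hKdim : Module.finrank ℝ K.direction = d - 2) (hxK : x ∈ K) :
    ∃ (c : EuclideanSpace ℝ (Fin d)) (lam : ℝ), c ≠ 0 ∧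
      (K : Set (EuclideanSpace ℝ (Fin d))) ⊆ {y | ⟪y, c⟫ = lam} ∧
      (S.filter fun y => lam < ⟪y, c⟫).card < n ∧
      (S.filter fun y => ⟪y, c⟫ < lam).card < n := by
  classical
  set W := K.directionᗮ with hWdef
  have hdimW : Module.finrank ℝ W = 2 := by
    have h1 := Submodule.finrank_add_finrank_orthogonal (K := K.direction)
    have h2 : Module.finrank ℝ (EuclideanSpace ℝ (Fin d)) = d :=
      finrank_euclideanSpace_fin
    rw [hWdef]
    omega
  let b : OrthonormalBasis (Fin 2) ℝ W :=
    (stdOrthonormalBasis ℝ W).reindex (finCongr hdimW)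
  set u : EuclideanSpace ℝ (Fin d) := (↑(b 0) : EuclideanSpace ℝ (Fin d)) with hu
  set v : EuclideanSpace ℝ (Fin d) := (↑(b 1) : EuclideanSpace ℝ (Fin d)) with hv
  have huW : u ∈ W := (b 0).2
  have hvW : v ∈ W := (b 1).2
  have hon := orthonormal_iff_ite.mp b.orthonormal
  have huu : ⟪u, u⟫ = 1 := by
    have := hon 0 0; rwa [Submodule.coe_inner, if_pos rfl] at this
  have hvv : ⟪v, v⟫ = 1 := by
    have := hon 1 1; rwa [Submodule.coe_inner, if_pos rfl] at this
  have huv : ⟪u, v⟫ = 0 := by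
    have := hon 0 1; rwa [Submodule.coe_inner, if_neg (by decide)] at this
  -- the rotating normal vector
  set c : ℝ → EuclideanSpace ℝ (Fin d) :=
    fun θ => Real.cos θ • u + Real.sin θ • v with hcdef
  have hcW : ∀ θ, c θ ∈ W := fun θ =>
    W.add_mem (W.smul_mem _ huW) (W.smul_mem _ hvW)
  have hcself : ∀ θ, ⟪c θ, c θ⟫ = 1 := by
    intro θ
    have h1 : ⟪c θ, c θ⟫ = Real.cos θ * (Real.cos θ * ⟪u, u⟫)
        + 2 * (Real.cos θ * (Real.sin θ * ⟪u, v⟫))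
        + Real.sin θ * (Real.sin θ * ⟪v, v⟫) := by
      rw [hcdef]
      simp only [real_inner_add_add_self, real_inner_smul_left, real_inner_smul_right]
      ring
    rw [h1, huu, hvv, huv]
    nlinarith [Real.sin_sq_add_cos_sq θ]
  have hcne : ∀ θ, c θ ≠ 0 := by
    intro θ h
    have := hcself θ
    rw [h, inner_zero_left] at this
    norm_num at this
  have hflip : ∀ θ, c (θ + π) = -c θ := by
    intro θ
    simp only [hcdef, Real.cos_add_pi, Real.sin_add_pi, neg_smul, neg_add]
  -- continuity
  have hccont : Continuous c := by
    apply Continuous.add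
    · exact Real.continuous_cos.smul continuous_const
    · exact Real.continuous_sin.smul continuous_const
  -- counting sets
  set F : ℝ → Finset (EuclideanSpace ℝ (Fin d)) :=
    fun θ => S.filter (fun y => ⟪x, c θ⟫ < ⟪y, c θ⟫) with hFdef
  -- the two half counts sum to at most 2n-1
  have hsum : ∀ θ, (F θ).card + (F (θ + π)).card ≤ 2 * n - 1 := by
    intro θ
    have hdisj : Disjoint (F θ) (F (θ + π)) := by
      rw [Finset.disjoint_left]
      intro y hy hy'
      rw [hFdef, Finset.mem_filter] at hy hy'
      rw [hflip] at hy'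
      simp only [inner_neg_right, neg_lt_neg_iff] at hy'
      exact absurd hy'.2 (not_lt.mpr (le_of_lt hy.2))
    have hsub : F θ ∪ F (θ + π) ⊆ S.erase x := by
      intro y hy
      rw [Finset.mem_union] at hy
      rw [Finset.mem_erase]
      rcases hy with hy | hy <;> rw [hFdef, Finset.mem_filter] at hy
      · exact ⟨fun h => absurd (h ▸ hy.2) (lt_irrefl _), hy.1⟩
      · rw [hflip] at hy
        simp only [inner_neg_right, neg_lt_neg_iff] at hy
        exact ⟨fun h => absurd (h ▸ hy.2) (lt_irrefl _), hy.1⟩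
    calc (F θ).card + (F (θ + π)).card = (F θ ∪ F (θ + π)).card :=
          (Finset.card_union_of_disjoint hdisj).symm
      _ ≤ (S.erase x).card := Finset.card_le_card hsub
      _ = 2 * n - 1 := by rw [Finset.card_erase_of_mem hx, hcard]
  -- openness of the "bad" sets
  have hopen : IsOpen {θ : ℝ | n ≤ (F θ).card} := by
    rw [isOpen_iff_mem_nhds]
    intro θ0 hθ0
    have hev : ∀ᶠ θ in nhds θ0, ∀ y ∈ F θ0, ⟪x, c θ⟫ < ⟪y, c θ⟫ := by
      rw [Filter.eventually_all_finset]
      intro y hy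
      have hcont : Continuous fun θ => ⟪y, c θ⟫ - ⟪x, c θ⟫ :=
        (continuous_const.inner hccont).sub (continuous_const.inner hccont)
      have h0 : (0:ℝ) < ⟪y, c θ0⟫ - ⟪x, c θ0⟫ := by
        rw [hFdef, Finset.mem_filter] at hy; linarith [hy.2]
      exact ((hcont.tendsto θ0).eventually (eventually_gt_nhds h0)).mono
        fun θ h => sub_pos.mp h
    refine hev.mono fun θ h => ?_
    have hsub : F θ0 ⊆ F θ := by
      intro y hy
      have hy' := hy
      rw [hFdef, Finset.mem_filter] at hy'
      rw [hFdef, Finset.mem_filter]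
      exact ⟨hy'.1, h y hy⟩
    exact le_trans hθ0 (Finset.card_le_card hsub)
  have hopenB : IsOpen {θ : ℝ | n ≤ (F (θ + π)).card} := by
    have heq : {θ : ℝ | n ≤ (F (θ + π)).card}
        = (fun θ => θ + π) ⁻¹' {θ | n ≤ (F θ).card} := rfl
    rw [heq]
    exact hopen.preimage (continuous_add_right π)
  have key : ∃ θ, (F θ).card < n ∧ (F (θ + π)).card < n := by
    by_contra hcon
    push_neg at hcon
    have hcover : (Set.univ : Set ℝ)
        ⊆ {θ | n ≤ (F θ).card} ∪ {θ | n ≤ (F (θ + π)).card} := by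
      intro θ _
      by_cases h : n ≤ (F θ).card
      · exact Or.inl h
      · exact Or.inr (hcon θ (lt_of_not_ge h))
    have hAne : ∃ θ, n ≤ (F θ).card := by
      rcases hcover (Set.mem_univ 0) with h | h
      · exact ⟨0, h⟩
      · exact ⟨0 + π, h⟩
    obtain ⟨θA, hθA⟩ := hAne
    have hBne : n ≤ (F ((θA - π) + π)).card := by rw [sub_add_cancel]; exact hθA
    obtain ⟨θ, -, hθ1, hθ2⟩ := isPreconnected_univ _ _ hopen hopenB hcover
      ⟨θA, Set.mem_univ _, hθA⟩ ⟨θA - π, Set.mem_univ _, hBne⟩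
    have := hsum θ
    simp only [Set.mem_setOf_eq] at hθ1 hθ2
    omega
  obtain ⟨θ, h1, h2⟩ := key
  refine ⟨c θ, ⟪x, c θ⟫, hcne θ, ?_, ?_, ?_⟩
  · intro y hyK
    show ⟪y, c θ⟫ = ⟪x, c θ⟫
    have hmem : y - x ∈ K.direction := by
      have := AffineSubspace.vsub_mem_direction hyK hxK
      simpa using this
    have hco : c θ ∈ K.directionᗮ := hcW θ
    have h0 : ⟪y - x, c θ⟫ = 0 :=
      (Submodule.mem_orthogonal K.direction (c θ)).mp hco _ hmem
    rw [inner_sub_left] at h0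
    linarith
  · exact h1
  · have heq : (S.filter fun y => ⟪y, c θ⟫ < ⟪x, c θ⟫) = F (θ + π) := by
      apply Finset.filter_congr
      intro y _
      rw [hflip, inner_neg_right, inner_neg_right]
      exact neg_lt_neg_iff.symm
    rw [heq]
    exact h2
end

section
/- Let d ≥ 2 and let L be a finite set of one-dimensional linear subspaces of ℝ^d with |L| ≥ 3. Suppose that no two-dimensional linear subspace of ℝ^d contains exactly two members of L. Then there exists a two-dimensional linear subspace of ℝ^d containing every member of L. -/
open scoped Classical
open Finset

noncomputable section SG

variable {V : Type*} [NormedAddCommGroup V] [InnerProductSpace ℝ V]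

/-- Scaled squared distance from `p` to the line through `x` and `y`. -/
noncomputable def sgD (p x y : V) : ℝ :=
  (‖p - x‖ ^ 2 * ‖y - x‖ ^ 2 - (inner ℝ (p - x) (y - x) : ℝ) ^ 2) / ‖y - x‖ ^ 2

lemma sgD_self (p x : V) : sgD p x x = 0 := by
  simp [sgD]

lemma norm_sub_smul_sq (a b : V) (t : ℝ) :
    ‖a - t • b‖ ^ 2 = ‖a‖ ^ 2 - 2 * t * (inner ℝ a b : ℝ) + t ^ 2 * ‖b‖ ^ 2 := by
  rw [norm_sub_sq_real, real_inner_smul_right, norm_smul]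
  simp [mul_pow, sq_abs]
  ring

/-- Orthogonal decomposition of `p` w.r.t. the line through `x` and `y`. -/
lemma sgD_decomp (p x y : V) (hxy : y ≠ x) :
    ∃ (q : V) (t₀ : ℝ), p = x + t₀ • (y - x) + q ∧ (inner ℝ q (y - x) : ℝ) = 0 ∧
      sgD p x y = ‖q‖ ^ 2 := by
  have hw : (y - x) ≠ 0 := sub_ne_zero.mpr hxy
  have hW : ‖y - x‖ ^ 2 ≠ 0 := pow_ne_zero _ (norm_ne_zero_iff.mpr hw)
  set w := y - x with hwdef
  set t₀ : ℝ := (inner ℝ (p - x) w : ℝ) / ‖w‖ ^ 2 with ht₀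
  refine ⟨p - x - t₀ • w, t₀, by abel, ?_, ?_⟩
  · rw [inner_sub_left, real_inner_smul_left, real_inner_self_eq_norm_sq, ht₀]
    field_simp
    ring
  · have h1 : ‖p - x - t₀ • w‖ ^ 2 =
        ‖p - x‖ ^ 2 - 2 * t₀ * (inner ℝ (p - x) w : ℝ) + t₀ ^ 2 * ‖w‖ ^ 2 :=
      norm_sub_smul_sq (p - x) w t₀
    rw [sgD, h1, ht₀, ← hwdef]
    field_simp
    ring

def sgOnLine (x y z : V) : Prop := ∃ t : ℝ, z = x + t • (y - x)

lemma sgD_nonneg (p x y : V) : 0 ≤ sgD p x y := by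
  rcases eq_or_ne y x with h | h
  · rw [h, sgD_self]
  · obtain ⟨q, t₀, -, -, hq⟩ := sgD_decomp p x y h
    rw [hq]; positivity

lemma sgD_eq_zero_iff (p x y : V) (hxy : y ≠ x) :
    sgD p x y = 0 ↔ sgOnLine x y p := by
  have hw : (y - x) ≠ 0 := sub_ne_zero.mpr hxy
  obtain ⟨q, t₀, hp, hqw, hq⟩ := sgD_decomp p x y hxy
  constructor
  · intro h0
    rw [hq] at h0
    have : q = 0 := by
      have := pow_eq_zero_iff (n := 2) (by norm_num) |>.mp h0
      exact norm_eq_zero.mp this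
    exact ⟨t₀, by rw [hp, this, add_zero]⟩
  · rintro ⟨t, ht⟩
    have hqline : q = (t - t₀) • (y - x) := by
      have : x + t • (y - x) = x + t₀ • (y - x) + q := by rw [← ht, ← hp]
      have h2 : t • (y - x) - t₀ • (y - x) = q := by
        apply_fun (fun z => z - (x + t₀ • (y - x))) at this
        simpa [add_sub_cancel_left, add_assoc] using this
      rw [← h2, sub_smul]
    have : (t - t₀) * ‖y - x‖ ^ 2 = 0 := by
      rw [hqline, real_inner_smul_left, real_inner_self_eq_norm_sq] at hqw
      exact hqw
    have htt : t - t₀ = 0 := by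
      have hW : ‖y - x‖ ^ 2 ≠ 0 := pow_ne_zero _ (norm_ne_zero_iff.mpr hw)
      exact (mul_eq_zero.mp this).resolve_right hW
    rw [hq, hqline, htt, zero_smul, norm_zero]
    norm_num

lemma sgD_pos_iff (p x y : V) (hxy : y ≠ x) :
    0 < sgD p x y ↔ ¬ sgOnLine x y p := by
  rw [← sgD_eq_zero_iff p x y hxy]
  constructor
  · intro h h0; rw [h0] at h; exact lt_irrefl 0 h
  · intro h; exact lt_of_le_of_ne (sgD_nonneg p x y) (Ne.symm h)

lemma sg_real_bound (W P s t : ℝ) (hW : 0 < W) (hP : 0 < P) (hst : s ≠ t)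
    (hs : s * (s - 2 * t) ≤ 0) :
    0 < ((s ^ 2 * W + P) * (t ^ 2 * W + P) - (s * t * W + P) ^ 2) / (t ^ 2 * W + P) ∧
      ((s ^ 2 * W + P) * (t ^ 2 * W + P) - (s * t * W + P) ^ 2) / (t ^ 2 * W + P) < P := by
  have hden : 0 < t ^ 2 * W + P := by positivity
  have hnum : (s ^ 2 * W + P) * (t ^ 2 * W + P) - (s * t * W + P) ^ 2
      = W * P * (s - t) ^ 2 := by ring
  constructor
  · apply div_pos
    · rw [hnum]
      have h0 : s - t ≠ 0 := sub_ne_zero.mpr hst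
      have h1 : 0 < (s - t) ^ 2 :=
        lt_of_le_of_ne (sq_nonneg _) (Ne.symm (pow_ne_zero _ h0))
      positivity
    · exact hden
  · rw [div_lt_iff₀ hden, hnum]
    nlinarith [sq_nonneg (s - t), mul_pos hW hP]

lemma sgKelly (w q f : V) (hw : w ≠ 0) (hq : q ≠ 0) (hqw : (inner ℝ q w : ℝ) = 0)
    (s t : ℝ) (hst : s ≠ t) (hs : s * (s - 2 * t) ≤ 0) :
    0 < sgD (f + s • w) (f + q) (f + t • w) ∧
      sgD (f + s • w) (f + q) (f + t • w) < ‖q‖ ^ 2 := by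
  have hwq : (inner ℝ w q : ℝ) = 0 := by rw [real_inner_comm]; exact hqw
  have hW : 0 < ‖w‖ ^ 2 := pow_pos (norm_pos_iff.mpr hw) 2
  have hP : 0 < ‖q‖ ^ 2 := pow_pos (norm_pos_iff.mpr hq) 2
  have e1 : f + s • w - (f + q) = s • w - q := by abel
  have e2 : f + t • w - (f + q) = t • w - q := by abel
  have hn1 : ‖s • w - q‖ ^ 2 = s ^ 2 * ‖w‖ ^ 2 + ‖q‖ ^ 2 := by
    rw [norm_sub_sq_real, real_inner_smul_left, hwq, norm_smul]
    simp [mul_pow, sq_abs]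
  have hn2 : ‖t • w - q‖ ^ 2 = t ^ 2 * ‖w‖ ^ 2 + ‖q‖ ^ 2 := by
    rw [norm_sub_sq_real, real_inner_smul_left, hwq, norm_smul]
    simp [mul_pow, sq_abs]
  have hi : (inner ℝ (s • w - q) (t • w - q) : ℝ) = s * t * ‖w‖ ^ 2 + ‖q‖ ^ 2 := by
    simp only [inner_sub_left, inner_sub_right, real_inner_smul_left, real_inner_smul_right,
      hwq, hqw, real_inner_self_eq_norm_sq]
    ring
  have hD : sgD (f + s • w) (f + q) (f + t • w)
      = ((s ^ 2 * ‖w‖ ^ 2 + ‖q‖ ^ 2) * (t ^ 2 * ‖w‖ ^ 2 + ‖q‖ ^ 2)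
          - (s * t * ‖w‖ ^ 2 + ‖q‖ ^ 2) ^ 2) / (t ^ 2 * ‖w‖ ^ 2 + ‖q‖ ^ 2) := by
    rw [sgD, e1, e2, hn1, hn2, hi]
  rw [hD]
  exact sg_real_bound _ _ s t hW hP hst hs

lemma sg_pair (a b : ℝ) (hab : a ≠ b) (h : 0 ≤ a * b) :
    ∃ s t : ℝ, ((s = a ∧ t = b) ∨ (s = b ∧ t = a)) ∧ s ≠ t ∧ s * (s - 2 * t) ≤ 0 := by
  rcases le_total (a ^ 2) (b ^ 2) with hle | hle
  · refine ⟨a, b, Or.inl ⟨rfl, rfl⟩, hab, ?_⟩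
    nlinarith [sq_nonneg (a - b), sq_nonneg (a + b), sq_nonneg a]
  · refine ⟨b, a, Or.inr ⟨rfl, rfl⟩, Ne.symm hab, ?_⟩
    nlinarith [sq_nonneg (a - b), sq_nonneg (a + b), sq_nonneg b]

lemma sg_three_reals (r1 r2 r3 : ℝ) (h12 : r1 ≠ r2) (h13 : r1 ≠ r3) (h23 : r2 ≠ r3) :
    ∃ s t : ℝ, (s = r1 ∨ s = r2 ∨ s = r3) ∧ (t = r1 ∨ t = r2 ∨ t = r3) ∧
      s ≠ t ∧ s * (s - 2 * t) ≤ 0 := by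
  rcases le_or_gt 0 (r1 * r2) with h | h
  · obtain ⟨s, t, hor, hst, hkey⟩ := sg_pair r1 r2 h12 h
    exact ⟨s, t, by tauto, by tauto, hst, hkey⟩
  · rcases le_or_gt 0 (r1 * r3) with h' | h'
    · obtain ⟨s, t, hor, hst, hkey⟩ := sg_pair r1 r3 h13 h'
      exact ⟨s, t, by tauto, by tauto, hst, hkey⟩
    · have h23' : 0 ≤ r2 * r3 := by nlinarith [mul_pos_of_neg_of_neg h h', sq_nonneg r1]
      obtain ⟨s, t, hor, hst, hkey⟩ := sg_pair r2 r3 h23 h23'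
      exact ⟨s, t, by tauto, by tauto, hst, hkey⟩

/-- Sylvester–Gallai, vector form. -/
theorem sgMain (S : Finset V)
    (h3 : ∀ x ∈ S, ∀ y ∈ S, x ≠ y → ∃ z ∈ S, z ≠ x ∧ z ≠ y ∧ sgOnLine x y z) :
    ∀ x ∈ S, ∀ y ∈ S, x ≠ y → ∀ z ∈ S, sgOnLine x y z := by
  by_contra hcon
  push_neg at hcon
  obtain ⟨x1, hx1, y1, hy1, hxy1, z1, hz1, hnl⟩ := hcon
  set T : Finset (V × V × V) :=
    (S ×ˢ S ×ˢ S).filter (fun r => 0 < sgD r.1 r.2.1 r.2.2) with hT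
  have hmemT : ∀ r : V × V × V, r ∈ T ↔
      (r.1 ∈ S ∧ r.2.1 ∈ S ∧ r.2.2 ∈ S) ∧ 0 < sgD r.1 r.2.1 r.2.2 := by
    intro r
    simp [hT, Finset.mem_filter, Finset.mem_product, and_assoc]
  have hne : T.Nonempty := by
    refine ⟨(z1, x1, y1), (hmemT _).mpr ⟨⟨hz1, hx1, hy1⟩, ?_⟩⟩
    exact (sgD_pos_iff z1 x1 y1 (Ne.symm hxy1)).mpr hnl
  obtain ⟨⟨p, x0, y0⟩, hmem, hmin⟩ :=
    Finset.exists_min_image T (fun r => sgD r.1 r.2.1 r.2.2) hne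
  obtain ⟨⟨hpS, hx0S, hy0S⟩, hpos⟩ := (hmemT _).mp hmem
  have hyx : y0 ≠ x0 := by
    rintro rfl
    rw [sgD_self] at hpos
    exact lt_irrefl 0 hpos
  have hw : y0 - x0 ≠ 0 := sub_ne_zero.mpr hyx
  set w := y0 - x0 with hwdef
  obtain ⟨c, hcS, hcx, hcy, tc, htc⟩ := h3 x0 hx0S y0 hy0S (Ne.symm hyx)
  obtain ⟨q, t₀, hp, hqw, hDq⟩ := sgD_decomp p x0 y0 hyx
  have hq : q ≠ 0 := by
    intro h0
    rw [hDq, h0, norm_zero] at hpos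
    norm_num at hpos
  set f := x0 + t₀ • w with hf
  have hrep : ∀ a : ℝ, f + a • w = x0 + (t₀ + a) • w := by
    intro a
    rw [add_smul, hf]
    abel
  have hx0rep : x0 = f + (-t₀) • w := by
    rw [hrep]
    simp
  have hy0rep : y0 = f + (1 - t₀) • w := by
    rw [hrep]
    have : t₀ + (1 - t₀) = 1 := by ring
    rw [this, one_smul, hwdef]
    abel
  have hcrep : c = f + (tc - t₀) • w := by
    rw [hrep]
    have : t₀ + (tc - t₀) = tc := by ring
    rw [this, htc]
  have hprep : p = f + q := by rw [hf, hp]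
  -- distinctness of the three parameters
  have hr12 : (-t₀ : ℝ) ≠ 1 - t₀ := by intro h; nlinarith [h]
  have hr13 : (-t₀ : ℝ) ≠ tc - t₀ := by
    intro h
    apply hcx
    rw [hcrep, ← h, ← hx0rep]
  have hr23 : (1 - t₀ : ℝ) ≠ tc - t₀ := by
    intro h
    apply hcy
    rw [hcrep, ← h, ← hy0rep]
  obtain ⟨s, t, hsmem, htmem, hst, hkey⟩ := sg_three_reals (-t₀) (1 - t₀) (tc - t₀) hr12 hr13 hr23
  have hbS : f + s • w ∈ S := by
    rcases hsmem with h | h | h <;> rw [h]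
    · rw [← hx0rep]; exact hx0S
    · rw [← hy0rep]; exact hy0S
    · rw [← hcrep]; exact hcS
  have haS : f + t • w ∈ S := by
    rcases htmem with h | h | h <;> rw [h]
    · rw [← hx0rep]; exact hx0S
    · rw [← hy0rep]; exact hy0S
    · rw [← hcrep]; exact hcS
  obtain ⟨hKpos, hKlt⟩ := sgKelly w q f hw hq hqw s t hst hkey
  have hTnew : ((f + s • w, f + q, f + t • w) : V × V × V) ∈ T := by
    rw [hmemT]
    exact ⟨⟨hbS, by rw [← hprep]; exact hpS, haS⟩, hKpos⟩
  have := hmin _ hTnew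
  simp only at this
  rw [← hprep] at hKlt
  rw [← hDq] at hKlt
  have h2 : sgD p x0 y0 ≤ sgD (f + s • w) (f + q) (f + t • w) := this
  rw [← hprep] at h2
  exact absurd (lt_of_le_of_lt h2 hKlt) (lt_irrefl _)

end SG

open Module



/-- corollary of Sylvester–Gallai: let `d ≥ 2` and let `L` be a finite set of
one-dimensional linear subspaces (lines through the origin) of `ℝ^d` with `|L| ≥ 3`.  If no
two-dimensional linear subspace contains exactly two members of `L`, then some two-dimensional
linear subspace contains all members of `L`. -/
theorem stmt14 (d : ℕ) (hd : 2 ≤ d)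
    (L : Finset (Submodule ℝ (EuclideanSpace ℝ (Fin d))))
    (hdim : ∀ l ∈ L, Module.finrank ℝ l = 1)
    (hL : 3 ≤ L.card)
    (hno2 : ∀ P : Submodule ℝ (EuclideanSpace ℝ (Fin d)), Module.finrank ℝ P = 2 →
      (L.filter fun l => l ≤ P).card ≠ 2) :
    ∃ P : Submodule ℝ (EuclideanSpace ℝ (Fin d)), Module.finrank ℝ P = 2 ∧
      ∀ l ∈ L, l ≤ P := by
  classical
  set V := EuclideanSpace ℝ (Fin d)
  -- choose a nonzero vector in each line
  have hu : ∀ l ∈ L, ∃ u : V, u ∈ l ∧ u ≠ 0 := by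
    intro l hl
    apply Submodule.exists_mem_ne_zero_of_ne_bot
    intro hbot
    have := hdim l hl
    rw [hbot] at this
    simp [finrank_bot] at this
  choose u huMem huNe using hu
  -- each line is the span of its chosen vector
  have hspan : ∀ l (hl : l ∈ L), (ℝ ∙ u l hl) = l := by
    intro l hl
    apply Submodule.eq_of_le_of_finrank_eq
    · rw [Submodule.span_le, Set.singleton_subset_iff]
      exact huMem l hl
    · rw [finrank_span_singleton (huNe l hl), hdim l hl]
  -- find v not orthogonal to any of the chosen vectors
  have hv : ∃ v : V, ∀ l (hl : l ∈ L), (inner ℝ v (u l hl) : ℝ) ≠ 0 := by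
    set s : Finset (Submodule ℝ V) := L.attach.image (fun l => (ℝ ∙ u l.1 l.2)ᗮ) with hs
    have htop : ⊤ ∉ s := by
      intro htop
      rw [hs] at htop
      simp only [Finset.mem_image, Finset.mem_attach, true_and] at htop
      obtain ⟨⟨l, hl⟩, heq⟩ := htop
      have : u l hl ∈ (ℝ ∙ u l hl)ᗮ := by rw [heq]; trivial
      have := Submodule.mem_orthogonal_singleton_iff_inner_right.mp this
      rw [real_inner_self_eq_norm_sq] at this
      exact huNe l hl (norm_eq_zero.mp (pow_eq_zero_iff two_ne_zero |>.mp this))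
    have hne := Subspace.biUnion_ne_univ_of_top_notMem htop
    have : ∃ v : V, v ∉ ⋃ p ∈ s, (p : Set V) := by
      by_contra hcon
      push_neg at hcon
      exact hne (Set.eq_univ_of_forall hcon)
    obtain ⟨v, hvmem⟩ := this
    refine ⟨v, fun l hl hinner => ?_⟩
    apply hvmem
    have h1 : ((ℝ ∙ u l hl)ᗮ : Submodule ℝ V) ∈ s := by
      rw [hs]
      simp only [Finset.mem_image, Finset.mem_attach, true_and]
      exact ⟨⟨l, hl⟩, rfl⟩
    exact Set.mem_biUnion h1 (Submodule.mem_orthogonal_singleton_iff_inner_left.mpr hinner)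
  obtain ⟨v, hv⟩ := hv
  -- normalized points: one point per line, lying on the affine hyperplane ⟪v, ⬝⟫ = 1
  set pt : (l : Submodule ℝ V) → l ∈ L → V :=
    fun l hl => ((inner ℝ v (u l hl) : ℝ))⁻¹ • u l hl with hptdef
  have hptInner : ∀ l (hl : l ∈ L), (inner ℝ v (pt l hl) : ℝ) = 1 := by
    intro l hl
    rw [hptdef]
    simp only [real_inner_smul_right]
    exact inv_mul_cancel₀ (hv l hl)
  have hptNe : ∀ l (hl : l ∈ L), pt l hl ≠ 0 := by
    intro l hl h0
    have := hptInner l hl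
    rw [h0, inner_zero_right] at this
    norm_num at this
  have hptSpan : ∀ l (hl : l ∈ L), (ℝ ∙ pt l hl) = l := by
    intro l hl
    rw [hptdef]
    simp only
    rw [Submodule.span_singleton_smul_eq (IsUnit.mk0 _ (inv_ne_zero (hv l hl))), hspan]
  have hptMem : ∀ l (hl : l ∈ L), pt l hl ∈ l := by
    intro l hl
    exact Submodule.smul_mem l _ (huMem l hl)
  -- injectivity: the point determines the line
  have hinj : ∀ l (hl : l ∈ L) l' (hl' : l' ∈ L), pt l hl = pt l' hl' → l = l' := by
    intro l hl l' hl' heq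
    rw [← hptSpan l hl, ← hptSpan l' hl', heq]
  -- a point of the hyperplane lying in a plane lx ⊔ ly is on the affine line
  have hplaneMem : ∀ x y z : V, (inner ℝ v x : ℝ) = 1 → (inner ℝ v y : ℝ) = 1 →
      (inner ℝ v z : ℝ) = 1 → z ∈ (ℝ ∙ x) ⊔ (ℝ ∙ y) → sgOnLine x y z := by
    intro x y z hx1 hy1 hz1 hzmem
    have hzp : z ∈ Submodule.span ℝ {x, y} := by
      rw [Submodule.span_insert]
      exact hzmem
    obtain ⟨a, b, hab⟩ := Submodule.mem_span_pair.mp hzp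
    have hsum : a + b = 1 := by
      rw [← hab, inner_add_right, real_inner_smul_right, real_inner_smul_right,
        hx1, hy1, mul_one, mul_one] at hz1
      exact hz1
    refine ⟨b, ?_⟩
    rw [← hab]
    have ha : a = 1 - b := by linarith
    rw [ha, sub_smul, one_smul, smul_sub]
    abel
  -- two distinct lines of L meet only at 0, and their join is a plane
  have hinf : ∀ l (hl : l ∈ L) l' (hl' : l' ∈ L), l ≠ l' → l ⊓ l' = ⊥ := by
    intro l hl l' hl' hne
    by_contra hbot
    obtain ⟨z, hzmem, hzne⟩ := Submodule.exists_mem_ne_zero_of_ne_bot hbot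
    obtain ⟨hz1, hz2⟩ := Submodule.mem_inf.mp hzmem
    apply hne
    have e1 : (ℝ ∙ z) = l := by
      apply Submodule.eq_of_le_of_finrank_eq
      · rw [Submodule.span_le, Set.singleton_subset_iff]; exact hz1
      · rw [finrank_span_singleton hzne, hdim l hl]
    have e2 : (ℝ ∙ z) = l' := by
      apply Submodule.eq_of_le_of_finrank_eq
      · rw [Submodule.span_le, Set.singleton_subset_iff]; exact hz2
      · rw [finrank_span_singleton hzne, hdim l' hl']
    rw [← e1, ← e2]
  have hsup : ∀ l (hl : l ∈ L) l' (hl' : l' ∈ L), l ≠ l' → finrank ℝ ↥(l ⊔ l') = 2 := by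
    intro l hl l' hl' hne
    have := Submodule.finrank_sup_add_finrank_inf_eq l l'
    rw [hinf l hl l' hl' hne, hdim l hl, hdim l' hl'] at this
    simpa using this
  -- the set of points
  set S : Finset V := L.attach.image (fun l => pt l.1 l.2) with hS
  have hmemS : ∀ z, z ∈ S ↔ ∃ l, ∃ hl : l ∈ L, pt l hl = z := by
    intro z
    constructor
    · intro hz
      rw [hS] at hz
      obtain ⟨⟨l, hl⟩, -, h⟩ := Finset.mem_image.mp hz
      exact ⟨l, hl, h⟩
    · rintro ⟨l, hl, h⟩
      rw [hS]
      exact Finset.mem_image.mpr ⟨⟨l, hl⟩, Finset.mem_attach _ _, h⟩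
  -- the Sylvester–Gallai hypothesis
  have h3 : ∀ x ∈ S, ∀ y ∈ S, x ≠ y → ∃ z ∈ S, z ≠ x ∧ z ≠ y ∧ sgOnLine x y z := by
    intro x hx y hy hxy
    obtain ⟨lx, hlx, hptx⟩ := (hmemS x).mp hx
    obtain ⟨ly, hly, hpty⟩ := (hmemS y).mp hy
    have hlne : lx ≠ ly := by
      intro h
      apply hxy
      rw [← hptx, ← hpty]
      subst h
      rfl
    set P := lx ⊔ ly with hP
    have hP2 : finrank ℝ ↥P = 2 := hsup lx hlx ly hly hlne
    have hcard : 2 ≤ (L.filter fun l => l ≤ P).card := by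
      have hsub : ({lx, ly} : Finset _) ⊆ L.filter fun l => l ≤ P := by
        intro l hlmem
        rcases Finset.mem_insert.mp hlmem with h | h
        · subst h; exact Finset.mem_filter.mpr ⟨hlx, le_sup_left⟩
        · rw [Finset.mem_singleton] at h; subst h
          exact Finset.mem_filter.mpr ⟨hly, le_sup_right⟩
      calc 2 = ({lx, ly} : Finset _).card := (Finset.card_pair hlne).symm
        _ ≤ _ := Finset.card_le_card hsub
    have hcard3 : 3 ≤ (L.filter fun l => l ≤ P).card := by
      have hne2 := hno2 P hP2
      omega
    have : (((L.filter fun l => l ≤ P).erase lx).erase ly).Nonempty := by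
      rw [← Finset.card_pos]
      have h1 := Finset.pred_card_le_card_erase
        (s := (L.filter fun l => l ≤ P).erase lx) (a := ly)
      have h2 := Finset.pred_card_le_card_erase (s := L.filter fun l => l ≤ P) (a := lx)
      omega
    obtain ⟨lz, hlz⟩ := this
    have hlzy : lz ≠ ly := Finset.ne_of_mem_erase hlz
    have hlz' := Finset.mem_of_mem_erase hlz
    have hlzx : lz ≠ lx := Finset.ne_of_mem_erase hlz'
    have hlzfil := Finset.mem_of_mem_erase hlz'
    obtain ⟨hlzL, hlzP⟩ := Finset.mem_filter.mp hlzfil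
    refine ⟨pt lz hlzL, (hmemS _).mpr ⟨lz, hlzL, rfl⟩, ?_, ?_, ?_⟩
    · intro h; rw [← hptx] at h; exact hlzx (hinj lz hlzL lx hlx h)
    · intro h; rw [← hpty] at h; exact hlzy (hinj lz hlzL ly hly h)
    · rw [← hptx, ← hpty]
      refine hplaneMem _ _ _ (hptInner lx hlx) (hptInner ly hly) (hptInner lz hlzL) ?_
      rw [hptSpan lx hlx, hptSpan ly hly]
      exact hlzP (hptMem lz hlzL)
  have hSG := sgMain S h3
  -- pick two distinct lines
  have h1lt : 1 < L.card := by omega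
  obtain ⟨l1, hl1, l2, hl2, hl12⟩ := Finset.one_lt_card.mp h1lt
  refine ⟨l1 ⊔ l2, hsup l1 hl1 l2 hl2 hl12, ?_⟩
  intro l hl
  set x := pt l1 hl1
  set y := pt l2 hl2
  have hxy : x ≠ y := by
    intro h
    exact hl12 (hinj l1 hl1 l2 hl2 h)
  have hz := hSG x ((hmemS x).mpr ⟨l1, hl1, rfl⟩) y ((hmemS y).mpr ⟨l2, hl2, rfl⟩) hxy
    (pt l hl) ((hmemS _).mpr ⟨l, hl, rfl⟩)
  obtain ⟨t, ht⟩ := hz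
  have hmem : pt l hl ∈ l1 ⊔ l2 := by
    have hx : x ∈ l1 ⊔ l2 := Submodule.mem_sup_left (hptMem l1 hl1)
    have hy : y ∈ l1 ⊔ l2 := Submodule.mem_sup_right (hptMem l2 hl2)
    rw [ht]
    exact Submodule.add_mem _ hx (Submodule.smul_mem _ _ (Submodule.sub_mem _ hy hx))
  rw [← hptSpan l hl, Submodule.span_le, Set.singleton_subset_iff]
  exact hmem
end

section
/- Let S be a finite set of points in ℝ^d with |S| ≥ 3, in general position. If either d = 2 and |S| is odd, or d ≥ 3, then Bob wins, i.e. Alice has no winning point: for every a ∈ ℝ^d there exists b ∈ ℝ^d with V_B(a,b) > V_A(a,b). -/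
open scoped RealInnerProductSpace

/-- `claims S a b` is the number of voters in `S` strictly closer to `a` than to `b`.
Thus `V_A(a,b) = claims S a b` and `V_B(a,b) = claims S b a`. -/
noncomputable def claims {d : ℕ} (S : Finset (EuclideanSpace ℝ (Fin d)))
    (a b : EuclideanSpace ℝ (Fin d)) : ℕ :=
  (S.filter fun x => dist a x < dist b x).card

/-- `a` is a winning point for Alice: `V_A(a,b) ≥ V_B(a,b)` for every `b`. -/
def IsWinningPoint {d : ℕ} (S : Finset (EuclideanSpace ℝ (Fin d)))
    (a : EuclideanSpace ℝ (Fin d)) : Prop :=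
  ∀ b : EuclideanSpace ℝ (Fin d), claims S b a ≤ claims S a b

open scoped Classical in
/-- `S` is in general position: for each `i ∈ {1, …, d-1}`, every affine subspace of
dimension `i` contains at most `i + 1` points of `S`. -/
noncomputable def InGeneralPosition {d : ℕ} (S : Finset (EuclideanSpace ℝ (Fin d))) : Prop :=
  ∀ i : ℕ, 1 ≤ i → i ≤ d - 1 →
    ∀ W : AffineSubspace ℝ (EuclideanSpace ℝ (Fin d)),
      Module.finrank ℝ W.direction = i → (S.filter fun y => y ∈ W).card ≤ i + 1

section Aux

variable {E : Type*} [NormedAddCommGroup E] [InnerProductSpace ℝ E]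

/-- A vector in `K` having nonzero inner product with every member of a finite set,
provided each member admits some such vector in `K`. -/
lemma exists_generic (K : Submodule ℝ E) (T : Finset E)
    (hT : ∀ y ∈ T, ∃ w ∈ K, ⟪w, y⟫ ≠ 0) :
    ∃ w ∈ K, ∀ y ∈ T, ⟪w, y⟫ ≠ 0 := by
  classical
  induction T using Finset.induction with
  | empty => exact ⟨0, K.zero_mem, by simp⟩
  | @insert y0 T hy0 ih =>
    obtain ⟨w, hwK, hw⟩ := ih (fun y hy => hT y (Finset.mem_insert_of_mem hy))
    obtain ⟨w0, hw0K, hw0⟩ := hT y0 (Finset.mem_insert_self _ _)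
    obtain ⟨t, ht⟩ := Infinite.exists_notMem_finset
      ((insert y0 T).image fun y => -(⟪w0, y⟫ / ⟪w, y⟫))
    refine ⟨w0 + t • w, K.add_mem hw0K (K.smul_mem t hwK), ?_⟩
    intro y hy
    rw [inner_add_left, real_inner_smul_left]
    intro heq
    by_cases hwy : ⟪w, y⟫ = 0
    · rcases Finset.mem_insert.1 hy with rfl | hyT
      · rw [hwy, mul_zero, add_zero] at heq; exact hw0 heq
      · exact hw y hyT hwy
    · apply ht
      refine Finset.mem_image.2 ⟨y, hy, ?_⟩
      field_simp
      linarith [heq]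

lemma perturb (a w s : E) (S : Finset E) :
    ∃ t : ℝ, 0 < t ∧ ∀ x ∈ S,
      (0 < ⟪w + t • s, x - a⟫ ↔
        (0 < ⟪w, x - a⟫ ∨ (⟪w, x - a⟫ = 0 ∧ 0 < ⟪s, x - a⟫))) := by
  classical
  set B : Finset ℝ := insert 1 ((S.filter fun x => ⟪w, x - a⟫ ≠ 0).image
      fun x => |⟪w, x - a⟫| / (|⟪s, x - a⟫| + 1)) with hB
  have hBne : B.Nonempty := ⟨1, Finset.mem_insert_self _ _⟩
  set t := B.min' hBne with htdef
  have htB : t ∈ B := B.min'_mem hBne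
  have hpos : ∀ b ∈ B, (0:ℝ) < b := by
    intro b hb
    rcases Finset.mem_insert.1 hb with rfl | hb
    · norm_num
    · obtain ⟨x, hx, rfl⟩ := Finset.mem_image.1 hb
      have h0 := (Finset.mem_filter.1 hx).2
      have h1 : 0 < |⟪w, x - a⟫| := abs_pos.2 h0
      have h2 : (0:ℝ) < |⟪s, x - a⟫| + 1 := by positivity
      positivity
  have ht : 0 < t := hpos t htB
  refine ⟨t, ht, ?_⟩
  intro x hx
  have hexp : ⟪w + t • s, x - a⟫ = ⟪w, x - a⟫ + t * ⟪s, x - a⟫ := by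
    rw [inner_add_left, real_inner_smul_left]
  by_cases hz : ⟪w, x - a⟫ = 0
  · rw [hexp, hz, zero_add]
    constructor
    · intro h
      refine Or.inr ⟨rfl, ?_⟩
      by_contra hcon
      push_neg at hcon
      nlinarith
    · rintro (h | ⟨-, h⟩)
      · exact absurd h (lt_irrefl 0)
      · exact mul_pos ht h
  · have hmem : |⟪w, x - a⟫| / (|⟪s, x - a⟫| + 1) ∈ B :=
      Finset.mem_insert_of_mem (Finset.mem_image.2 ⟨x, Finset.mem_filter.2 ⟨hx, hz⟩, rfl⟩)
    have hle : t ≤ |⟪w, x - a⟫| / (|⟪s, x - a⟫| + 1) := B.min'_le _ hmem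
    have hden : (0:ℝ) < |⟪s, x - a⟫| + 1 := by positivity
    have hkey : |t * ⟪s, x - a⟫| < |⟪w, x - a⟫| := by
      rw [abs_mul, abs_of_pos ht]
      have h1 : t * (|⟪s, x - a⟫| + 1) ≤ |⟪w, x - a⟫| := by
        calc t * (|⟪s, x - a⟫| + 1)
            ≤ (|⟪w, x - a⟫| / (|⟪s, x - a⟫| + 1)) * (|⟪s, x - a⟫| + 1) :=
              mul_le_mul_of_nonneg_right hle (le_of_lt hden)
          _ = |⟪w, x - a⟫| := by field_simp
      nlinarith
    rw [hexp]
    rcases lt_or_gt_of_ne hz with h | h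
    · have h1 : |⟪w, x - a⟫| = -⟪w, x - a⟫ := abs_of_neg h
      have h2 := le_abs_self (t * ⟪s, x - a⟫)
      constructor
      · intro hc; linarith
      · rintro (hc | ⟨hc, -⟩)
        · linarith
        · exact absurd hc hz
    · have h1 : |⟪w, x - a⟫| = ⟪w, x - a⟫ := abs_of_pos h
      have h2 := neg_abs_le (t * ⟪s, x - a⟫)
      constructor
      · intro _; exact Or.inl h
      · intro _; linarith

lemma master {S : Finset E} {a : E}
    (H : ∀ v : E, 2 * (S.filter fun x => 0 < ⟪v, x - a⟫).card ≤ S.card) (w s : E) :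
    2 * ((S.filter fun x => 0 < ⟪w, x - a⟫).card
      + ((S.filter fun x => ⟪w, x - a⟫ = 0).filter fun x => 0 < ⟪s, x - a⟫).card) ≤ S.card := by
  classical
  obtain ⟨t, ht, hiff⟩ := perturb a w s S
  have h := H (w + t • s)
  rwa [Finset.filter_congr hiff, Finset.filter_or, Finset.card_union_of_disjoint
      (by
        rw [Finset.disjoint_left]
        intro x hx1 hx2
        have h1 := (Finset.mem_filter.1 hx1).2
        have h2 := (Finset.mem_filter.1 hx2).2.1
        exact absurd h2 (ne_of_gt h1)),
    ← Finset.filter_filter] at h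

lemma tricho (S : Finset E) (a w : E) :
    (S.filter fun x => 0 < ⟪w, x - a⟫).card + (S.filter fun x => ⟪w, x - a⟫ < 0).card
      + (S.filter fun x => ⟪w, x - a⟫ = 0).card = S.card := by
  classical
  have h := Finset.card_filter_add_card_filter_not (s := S)
    (p := fun x => 0 < ⟪w, x - a⟫)
  have h2 : S.filter (fun x => ¬ 0 < ⟪w, x - a⟫)
      = S.filter (fun x => ⟪w, x - a⟫ < 0) ∪ S.filter (fun x => ⟪w, x - a⟫ = 0) := by
    rw [← Finset.filter_or]
    apply Finset.filter_congr
    intro x _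
    constructor
    · intro hc; rcases lt_or_eq_of_le (not_lt.1 hc) with h' | h'
      · exact Or.inl h'
      · exact Or.inr h'
    · rintro (hc | hc) <;> simp [hc, not_lt, le_of_lt, le_of_eq]
  rw [h2, Finset.card_union_of_disjoint (by
      rw [Finset.disjoint_left]
      intro x hx1 hx2
      have e1 := (Finset.mem_filter.1 hx1).2
      have e2 := (Finset.mem_filter.1 hx2).2
      rw [e2] at e1
      exact absurd e1 (lt_irrefl 0))] at h
  omega

lemma exists_pos_pair (u1 u2 : E) (h1 : u1 ≠ 0) (h : ∀ c : ℝ, u2 ≠ c • u1) :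
    ∃ s : E, 0 < ⟪s, u1⟫ ∧ 0 < ⟪s, u2⟫ := by
  set r : ℝ := ⟪u1, u2⟫ / ‖u1‖ ^ 2 with hr
  set u2' : E := u2 - r • u1 with hu2'
  have hn1 : (0:ℝ) < ‖u1‖ ^ 2 := pow_pos (norm_pos_iff.mpr h1) 2
  have horth : ⟪u2', u1⟫ = 0 := by
    rw [hu2', inner_sub_left, real_inner_smul_left, hr, real_inner_comm u1 u2,
      real_inner_self_eq_norm_sq]
    field_simp
    ring
  have hu2'ne : u2' ≠ 0 := by
    intro hc
    exact h r (by rw [← sub_eq_zero]; exact hc)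
  have hn2 : (0:ℝ) < ‖u2'‖ ^ 2 := pow_pos (norm_pos_iff.mpr hu2'ne) 2
  set c2 : ℝ := (1 + |⟪u1, u2⟫|) / ‖u2'‖ ^ 2 with hc2
  refine ⟨u1 + c2 • u2', ?_, ?_⟩
  · rw [inner_add_left, real_inner_smul_left, horth, mul_zero, add_zero,
      real_inner_self_eq_norm_sq]
    exact hn1
  · have hu2 : u2 = u2' + r • u1 := by rw [hu2']; abel
    have h22 : ⟪u2', u2⟫ = ‖u2'‖ ^ 2 := by
      rw [hu2, inner_add_right, real_inner_smul_right, horth,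
        mul_zero, add_zero, real_inner_self_eq_norm_sq]
    rw [inner_add_left, real_inner_smul_left, h22]
    have hce : c2 * ‖u2'‖ ^ 2 = 1 + |⟪u1, u2⟫| := by rw [hc2]; field_simp
    rw [hce]
    have := neg_abs_le ⟪u1, u2⟫
    linarith

end Aux

lemma gp_bound {d : ℕ} {S : Finset (EuclideanSpace ℝ (Fin d))}
    (hgen : InGeneralPosition S)
    (i : ℕ) (h1 : 1 ≤ i) (h2 : i ≤ d - 1) (a : EuclideanSpace ℝ (Fin d))
    (U : Submodule ℝ (EuclideanSpace ℝ (Fin d))) (hU : Module.finrank ℝ U = i)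
    (F : Finset (EuclideanSpace ℝ (Fin d))) (hFS : F ⊆ S)
    (hmem : ∀ x ∈ F, x - a ∈ U) (hcard : i + 1 < F.card) : False := by
  classical
  have hW := hgen i h1 h2 (AffineSubspace.mk' a U)
    (by rw [AffineSubspace.direction_mk']; exact hU)
  have hsub : F ⊆ S.filter (fun y => y ∈ AffineSubspace.mk' a U) := by
    intro x hx
    refine Finset.mem_filter.2 ⟨hFS hx, ?_⟩
    rw [AffineSubspace.mem_mk', vsub_eq_sub]
    exact hmem x hx
  have hle := Finset.card_le_card hsub
  omega

lemma exists_better {d : ℕ} (S : Finset (EuclideanSpace ℝ (Fin d)))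
    (a v : EuclideanSpace ℝ (Fin d))
    (h : S.card < 2 * (S.filter fun x => 0 < ⟪v, x - a⟫).card) :
    ∃ b, claims S a b < claims S b a := by
  classical
  have hv : v ≠ 0 := by
    rintro rfl
    simp only [inner_zero_left, lt_irrefl, Finset.filter_false, Finset.card_empty] at h
    omega
  set P := S.filter (fun x => 0 < ⟪v, x - a⟫) with hP
  have hPne : P.Nonempty := by
    rw [← Finset.card_pos]; omega
  have hIne : (P.image fun x => ⟪v, x - a⟫).Nonempty := hPne.image _
  set m := (P.image fun x => ⟪v, x - a⟫).min' hIne with hm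
  have hmmem := (P.image fun x => ⟪v, x - a⟫).min'_mem hIne
  have hmpos : 0 < m := by
    obtain ⟨x, hx, hxe⟩ := Finset.mem_image.1 hmmem
    have hx2 : 0 < ⟪v, x - a⟫ := (Finset.mem_filter.1 hx).2
    rw [hm, ← hxe]
    exact hx2
  have hmle : ∀ x ∈ P, m ≤ ⟪v, x - a⟫ := fun x hx =>
    Finset.min'_le _ _ (Finset.mem_image_of_mem _ hx)
  have hnv : (0:ℝ) < ‖v‖ ^ 2 := pow_pos (norm_pos_iff.mpr hv) 2
  set t : ℝ := m / ‖v‖ ^ 2 with htd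
  have htpos : 0 < t := div_pos hmpos hnv
  have htv : t * ‖v‖ ^ 2 = m := by rw [htd]; field_simp
  set b := a + t • v with hb
  have hdist : ∀ x : EuclideanSpace ℝ (Fin d),
      dist b x ^ 2 - dist a x ^ 2 = t ^ 2 * ‖v‖ ^ 2 - 2 * (t * ⟪v, x - a⟫) := by
    intro x
    rw [dist_eq_norm, dist_eq_norm, hb]
    have : a + t • v - x = (a - x) + t • v := by abel
    rw [this, norm_add_sq_real, real_inner_smul_right, norm_smul]
    have hinner : ⟪a - x, v⟫ = -⟪v, x - a⟫ := by
      rw [real_inner_comm, show a - x = -(x - a) from by abel, inner_neg_right]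
    rw [hinner]
    simp [Real.norm_eq_abs, mul_pow, sq_abs]
    ring
  have hiff1 : ∀ x : EuclideanSpace ℝ (Fin d), (dist b x < dist a x ↔ m < 2 * ⟪v, x - a⟫) := by
    intro x
    have hsq : dist b x < dist a x ↔ dist b x ^ 2 < dist a x ^ 2 :=
      (pow_lt_pow_iff_left₀ dist_nonneg dist_nonneg (by norm_num)).symm
    rw [hsq]
    have hd := hdist x
    constructor
    · intro hlt; nlinarith
    · intro hlt; nlinarith
  have hiff2 : ∀ x : EuclideanSpace ℝ (Fin d), (dist a x < dist b x ↔ 2 * ⟪v, x - a⟫ < m) := by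
    intro x
    have hsq : dist a x < dist b x ↔ dist a x ^ 2 < dist b x ^ 2 :=
      (pow_lt_pow_iff_left₀ dist_nonneg dist_nonneg (by norm_num)).symm
    rw [hsq]
    have hd := hdist x
    constructor
    · intro hlt; nlinarith
    · intro hlt; nlinarith
  refine ⟨b, ?_⟩
  have e1 : claims S b a = P.card := by
    unfold claims
    congr 1
    apply Finset.filter_congr
    intro x hx
    rw [hiff1 x]
    constructor
    · intro hlt
      by_contra hc
      simp only [not_lt] at hc
      nlinarith
    · intro hxP
      have := hmle x (Finset.mem_filter.2 ⟨hx, hxP⟩)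
      have hxpos : 0 < ⟪v, x - a⟫ := hxP
      nlinarith
  have e2 : claims S a b = S.card - P.card := by
    unfold claims
    have hfe : S.filter (fun x => dist a x < dist b x) = S.filter (fun x => ¬ 0 < ⟪v, x - a⟫) := by
      apply Finset.filter_congr
      intro x hx
      rw [hiff2 x]
      constructor
      · intro hlt
        intro hpos
        have := hmle x (Finset.mem_filter.2 ⟨hx, hpos⟩)
        nlinarith
      · intro hnp
        simp only [not_lt] at hnp
        nlinarith
    rw [hfe]
    have h3 := Finset.card_filter_add_card_filter_not (s := S)
      (p := fun x => 0 < ⟪v, x - a⟫)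
    rw [← hP] at h3
    omega
  rw [e1, e2]
  omega

/-- if `|S| ≥ 3`, `S` is in general position, and either `d = 2` with `|S|` odd
or `d ≥ 3`, then Bob wins: for every `a` there is `b` with `V_B(a,b) > V_A(a,b)`. -/
theorem stmt15 (d : ℕ) (hd : 1 ≤ d) (S : Finset (EuclideanSpace ℝ (Fin d)))
    (hS : 3 ≤ S.card) (hgen : InGeneralPosition S)
    (hcase : (d = 2 ∧ Odd S.card) ∨ 3 ≤ d) :
    ∀ a : EuclideanSpace ℝ (Fin d), ∃ b : EuclideanSpace ℝ (Fin d),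
      claims S a b < claims S b a := by
  classical
  intro a
  by_contra hcon
  push_neg at hcon
  -- `H`: every open halfspace bounded by a hyperplane through `a` contains
  -- at most half of the voters.
  have H : ∀ v : EuclideanSpace ℝ (Fin d),
      2 * (S.filter fun x => 0 < ⟪v, x - a⟫).card ≤ S.card := by
    intro v
    by_contra hv
    push_neg at hv
    obtain ⟨b, hb⟩ := exists_better S a v hv
    exact absurd (hcon b) (not_le.mpr hb)
  -- helper to produce a generic vector in `Uᗮ`
  have gen : ∀ U : Submodule ℝ (EuclideanSpace ℝ (Fin d)),
      ∃ w ∈ Uᗮ, ∀ x ∈ S, x - a ∉ U → ⟪w, x - a⟫ ≠ 0 := by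
    intro U
    have hOO : Uᗮᗮ = U := Submodule.orthogonal_orthogonal U
    obtain ⟨w, hwK, hw⟩ := exists_generic Uᗮ
      ((S.image fun x => x - a).filter (fun y => y ∉ U))
      (by
        intro y hy
        have hyU : y ∉ U := (Finset.mem_filter.1 hy).2
        rw [← hOO, Submodule.mem_orthogonal] at hyU
        push_neg at hyU
        exact hyU)
    refine ⟨w, hwK, ?_⟩
    intro x hx hxU
    exact hw (x - a) (Finset.mem_filter.2 ⟨Finset.mem_image_of_mem _ hx, hxU⟩)
  have horthz : ∀ (U : Submodule ℝ (EuclideanSpace ℝ (Fin d))) (w : EuclideanSpace ℝ (Fin d)),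
      w ∈ Uᗮ → ∀ y ∈ U, ⟪w, y⟫ = 0 := by
    intro U w hw y hy
    rw [real_inner_comm]
    exact (Submodule.mem_orthogonal U w).1 hw y hy
  by_cases haS : a ∈ S
  · -- a is one of the voters
    -- pick two other voters p0 ≠ q0
    have hcerase : 2 ≤ (S.erase a).card := by
      have := Finset.card_erase_of_mem haS
      omega
    obtain ⟨p0, hp0e, q0, hq0e, hpq⟩ := Finset.one_lt_card.1 (show 1 < (S.erase a).card by omega)
    obtain ⟨hp0a, hp0S⟩ := Finset.mem_erase.1 hp0e
    obtain ⟨hq0a, hq0S⟩ := Finset.mem_erase.1 hq0e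
    have hp0ne : p0 - a ≠ 0 := sub_ne_zero.2 hp0a
    rcases hcase with ⟨hd2, hodd⟩ | hd3
    · -- d = 2, |S| odd, a ∈ S : single crossing + parity
      set U := Submodule.span ℝ {p0 - a} with hU
      have key : ∀ x ∈ S, x ≠ a → x ≠ p0 → x - a ∉ U := by
        intro x hxS hxa hxp hxU
        refine gp_bound hgen 1 le_rfl (by omega) a U (finrank_span_singleton hp0ne)
          {a, p0, x} ?_ ?_ ?_
        · intro y hy
          simp only [Finset.mem_insert, Finset.mem_singleton] at hy
          rcases hy with rfl | rfl | rfl <;> assumption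
        · intro y hy
          simp only [Finset.mem_insert, Finset.mem_singleton] at hy
          rcases hy with rfl | rfl | rfl
          · rw [sub_self]; exact U.zero_mem
          · exact Submodule.mem_span_singleton_self _
          · exact hxU
        · rw [Finset.card_insert_of_notMem (by simp [Ne.symm hp0a, Ne.symm hxa]),
            Finset.card_insert_of_notMem (by simp [Ne.symm hxp]), Finset.card_singleton]
          norm_num
      obtain ⟨w, hwK, hw⟩ := gen U
      set s := p0 - a with hs
      have hm1 := master H w s
      have hm2 : 2 * ((S.filter fun x => ⟪w, x - a⟫ < 0).card
          + ((S.filter fun x => ⟪w, x - a⟫ = 0).filter fun x => 0 < ⟪s, x - a⟫).card)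
          ≤ S.card := by
        have := master H (-w) s
        simpa only [inner_neg_left, neg_pos, neg_eq_zero] using this
      have htr := tricho S a w
      have hzsub : (S.filter fun x => ⟪w, x - a⟫ = 0) ⊆ {a, p0} := by
        intro x hx
        obtain ⟨hxS, hx0⟩ := Finset.mem_filter.1 hx
        by_contra hmem
        simp only [Finset.mem_insert, Finset.mem_singleton, not_or] at hmem
        exact hw x hxS (key x hxS hmem.1 hmem.2) hx0
      have hz := Finset.card_le_card hzsub
      have hz2 : ({a, p0} : Finset (EuclideanSpace ℝ (Fin d))).card ≤ 2 :=
        (Finset.card_insert_le _ _).trans (by simp)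
      have hwp0 : ⟪w, p0 - a⟫ = 0 :=
        horthz U w hwK _ (Submodule.mem_span_singleton_self _)
      have hsp0 : 0 < ⟪s, p0 - a⟫ := by
        rw [hs, real_inner_self_eq_norm_sq]
        exact pow_pos (norm_pos_iff.mpr hp0ne) 2
      have hk : 1 ≤ ((S.filter fun x => ⟪w, x - a⟫ = 0).filter
          fun x => 0 < ⟪s, x - a⟫).card := by
        rw [Nat.one_le_iff_ne_zero, ← Nat.pos_iff_ne_zero, Finset.card_pos]
        exact ⟨p0, Finset.mem_filter.2 ⟨Finset.mem_filter.2 ⟨hp0S, hwp0⟩, hsp0⟩⟩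
      obtain ⟨mm, hmm⟩ := hodd
      omega
    · -- d ≥ 3, a ∈ S : use a plane through a, p0, q0
      have hq0span : q0 - a ∉ Submodule.span ℝ {p0 - a} := by
        intro hmem
        refine gp_bound hgen 1 le_rfl (by omega) a (Submodule.span ℝ {p0 - a})
          (finrank_span_singleton hp0ne) {a, p0, q0} ?_ ?_ ?_
        · intro y hy
          simp only [Finset.mem_insert, Finset.mem_singleton] at hy
          rcases hy with rfl | rfl | rfl <;> assumption
        · intro y hy
          simp only [Finset.mem_insert, Finset.mem_singleton] at hy
          rcases hy with rfl | rfl | rfl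
          · rw [sub_self]; exact Submodule.zero_mem _
          · exact Submodule.mem_span_singleton_self _
          · exact hmem
        · rw [Finset.card_insert_of_notMem (by simp [Ne.symm hp0a, Ne.symm hq0a]),
            Finset.card_insert_of_notMem (by simp [hpq]), Finset.card_singleton]
          norm_num
      have hli : LinearIndependent ℝ ![q0 - a, p0 - a] :=
        linearIndependent_fin2.2 ⟨hp0ne,
          fun c hc => hq0span (Submodule.mem_span_singleton.2 ⟨c, hc⟩)⟩
      set U := Submodule.span ℝ ({q0 - a, p0 - a} : Set (EuclideanSpace ℝ (Fin d))) with hU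
      have hrkU : Module.finrank ℝ U = 2 := by
        have hrange : Set.range ![q0 - a, p0 - a] = {q0 - a, p0 - a} := by
          rw [Set.pair_comm]
          simp [Matrix.range_cons, Matrix.range_empty]
        rw [hU, ← hrange, finrank_span_eq_card hli]
        simp
      have hp0U : p0 - a ∈ U := Submodule.subset_span (Set.mem_insert_of_mem _ rfl)
      have hq0U : q0 - a ∈ U := Submodule.subset_span (Set.mem_insert _ _)
      have key : ∀ x ∈ S, x ≠ a → x ≠ p0 → x ≠ q0 → x - a ∉ U := by
        intro x hxS hxa hxp hxq hxU
        refine gp_bound hgen 2 (by omega) (by omega) a U hrkU {a, p0, q0, x} ?_ ?_ ?_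
        · intro y hy
          simp only [Finset.mem_insert, Finset.mem_singleton] at hy
          rcases hy with rfl | rfl | rfl | rfl <;> assumption
        · intro y hy
          simp only [Finset.mem_insert, Finset.mem_singleton] at hy
          rcases hy with rfl | rfl | rfl | rfl
          · rw [sub_self]; exact U.zero_mem
          · exact hp0U
          · exact hq0U
          · exact hxU
        · rw [Finset.card_insert_of_notMem
              (by simp [Ne.symm hp0a, Ne.symm hq0a, Ne.symm hxa]),
            Finset.card_insert_of_notMem (by simp [hpq, Ne.symm hxp]),
            Finset.card_insert_of_notMem (by simp [Ne.symm hxq]), Finset.card_singleton]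
          norm_num
      obtain ⟨w, hwK, hw⟩ := gen U
      obtain ⟨s, hsp, hsq⟩ := exists_pos_pair (p0 - a) (q0 - a) hp0ne
        (fun c hc => hq0span (Submodule.mem_span_singleton.2 ⟨c, hc.symm ▸ rfl⟩))
      have hm1 := master H w s
      have hm2 : 2 * ((S.filter fun x => ⟪w, x - a⟫ < 0).card
          + ((S.filter fun x => ⟪w, x - a⟫ = 0).filter fun x => 0 < ⟪s, x - a⟫).card)
          ≤ S.card := by
        have := master H (-w) s
        simpa only [inner_neg_left, neg_pos, neg_eq_zero] using this
      have htr := tricho S a w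
      have hzsub : (S.filter fun x => ⟪w, x - a⟫ = 0) ⊆ {a, p0, q0} := by
        intro x hx
        obtain ⟨hxS, hx0⟩ := Finset.mem_filter.1 hx
        by_contra hmem
        simp only [Finset.mem_insert, Finset.mem_singleton, not_or] at hmem
        exact hw x hxS (key x hxS hmem.1 hmem.2.1 hmem.2.2) hx0
      have hz := Finset.card_le_card hzsub
      have hz2 : ({a, p0, q0} : Finset (EuclideanSpace ℝ (Fin d))).card ≤ 3 := by
        refine (Finset.card_insert_le _ _).trans ?_
        have := Finset.card_insert_le p0 ({q0} : Finset (EuclideanSpace ℝ (Fin d)))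
        simp only [Finset.card_singleton] at this
        omega
      have hwp0 : ⟪w, p0 - a⟫ = 0 := horthz U w hwK _ hp0U
      have hwq0 : ⟪w, q0 - a⟫ = 0 := horthz U w hwK _ hq0U
      have hksub : ({p0, q0} : Finset (EuclideanSpace ℝ (Fin d)))
          ⊆ (S.filter fun x => ⟪w, x - a⟫ = 0).filter fun x => 0 < ⟪s, x - a⟫ := by
        intro y hy
        simp only [Finset.mem_insert, Finset.mem_singleton] at hy
        rcases hy with rfl | rfl
        · exact Finset.mem_filter.2 ⟨Finset.mem_filter.2 ⟨hp0S, hwp0⟩, hsp⟩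
        · exact Finset.mem_filter.2 ⟨Finset.mem_filter.2 ⟨hq0S, hwq0⟩, hsq⟩
      have hk := Finset.card_le_card hksub
      rw [Finset.card_pair hpq] at hk
      omega
  · -- a is not a voter
    have hnz : ∀ x ∈ S, x - a ≠ 0 := by
      intro x hxS hc
      rw [sub_eq_zero] at hc
      exact haS (hc ▸ hxS)
    rcases hcase with ⟨hd2, hodd⟩ | hd3
    · -- d = 2, |S| odd, a ∉ S : parity
      obtain ⟨w, hwK, hw⟩ := gen ⊥
      have hw' : ∀ x ∈ S, ⟪w, x - a⟫ ≠ 0 := by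
        intro x hxS
        exact hw x hxS (by simp [Submodule.mem_bot, hnz x hxS])
      have h1 := H w
      have h2 : 2 * (S.filter fun x => ⟪w, x - a⟫ < 0).card ≤ S.card := by
        have := H (-w)
        simpa only [inner_neg_left, neg_pos] using this
      have htr := tricho S a w
      have hz : (S.filter fun x => ⟪w, x - a⟫ = 0).card = 0 := by
        rw [Finset.card_eq_zero]
        apply Finset.eq_empty_of_forall_notMem
        intro x hx
        obtain ⟨hxS, hx0⟩ := Finset.mem_filter.1 hx
        exact hw' x hxS hx0
      obtain ⟨mm, hmm⟩ := hodd
      omega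
    · -- d ≥ 3, a ∉ S
      by_cases hfree : ∃ p0 ∈ S, ∀ x ∈ S, x - a ∈ Submodule.span ℝ {p0 - a} → x = p0
      · -- some voter is alone on its line through a
        obtain ⟨p0, hp0S, hp0free⟩ := hfree
        have hp0ne : p0 - a ≠ 0 := hnz p0 hp0S
        set U := Submodule.span ℝ ({p0 - a} : Set (EuclideanSpace ℝ (Fin d))) with hU
        obtain ⟨w, hwK, hw⟩ := gen U
        set s := p0 - a with hs
        have hm1 := master H w s
        have hm2 : 2 * ((S.filter fun x => ⟪w, x - a⟫ < 0).card
            + ((S.filter fun x => ⟪w, x - a⟫ = 0).filter fun x => 0 < ⟪s, x - a⟫).card)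
            ≤ S.card := by
          have := master H (-w) s
          simpa only [inner_neg_left, neg_pos, neg_eq_zero] using this
        have htr := tricho S a w
        have hzsub : (S.filter fun x => ⟪w, x - a⟫ = 0) ⊆ {p0} := by
          intro x hx
          obtain ⟨hxS, hx0⟩ := Finset.mem_filter.1 hx
          rw [Finset.mem_singleton]
          by_contra hxp
          refine hw x hxS ?_ hx0
          intro hxU
          exact hxp (hp0free x hxS hxU)
        have hz := Finset.card_le_card hzsub
        rw [Finset.card_singleton] at hz
        have hwp0 : ⟪w, p0 - a⟫ = 0 :=
          horthz U w hwK _ (Submodule.mem_span_singleton_self _)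
        have hsp0 : 0 < ⟪s, p0 - a⟫ := by
          rw [hs, real_inner_self_eq_norm_sq]
          exact pow_pos (norm_pos_iff.mpr hp0ne) 2
        have hk : 1 ≤ ((S.filter fun x => ⟪w, x - a⟫ = 0).filter
            fun x => 0 < ⟪s, x - a⟫).card := by
          rw [Nat.one_le_iff_ne_zero, ← Nat.pos_iff_ne_zero, Finset.card_pos]
          exact ⟨p0, Finset.mem_filter.2 ⟨Finset.mem_filter.2 ⟨hp0S, hwp0⟩, hsp0⟩⟩
        omega
      · -- every voter has a partner on its line through a
        push_neg at hfree
        obtain ⟨p1, hp1S⟩ := Finset.card_pos.1 (by omega : 0 < S.card)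
        have hp1ne : p1 - a ≠ 0 := hnz p1 hp1S
        by_cases hline : ∀ x ∈ S, x - a ∈ Submodule.span ℝ {p1 - a}
        · -- all voters on one line through a : contradicts general position
          obtain ⟨x1, hx1S⟩ := Finset.card_pos.1 (by omega : 0 < S.card)
          have hcer : 1 < (S.erase x1).card := by
            have := Finset.card_erase_of_mem hx1S
            omega
          obtain ⟨x2, hx2e, x3, hx3e, hx23⟩ := Finset.one_lt_card.1 hcer
          obtain ⟨hx2ne, hx2S⟩ := Finset.mem_erase.1 hx2e
          obtain ⟨hx3ne, hx3S⟩ := Finset.mem_erase.1 hx3e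
          refine gp_bound hgen 1 le_rfl (by omega) a (Submodule.span ℝ {p1 - a})
            (finrank_span_singleton hp1ne) {x1, x2, x3} ?_ ?_ ?_
          · intro y hy
            simp only [Finset.mem_insert, Finset.mem_singleton] at hy
            rcases hy with rfl | rfl | rfl <;> assumption
          · intro y hy
            simp only [Finset.mem_insert, Finset.mem_singleton] at hy
            rcases hy with rfl | rfl | rfl <;> exact hline _ (by assumption)
          · rw [Finset.card_insert_of_notMem (by simp [Ne.symm hx2ne, Ne.symm hx3ne]),
              Finset.card_insert_of_notMem (by simp [hx23]), Finset.card_singleton]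
            norm_num
        · -- two genuinely different lines, each with two voters : 4 coplanar points
          push_neg at hline
          obtain ⟨q1, hq1S, hq1⟩ := hline
          obtain ⟨p1', hp1'S, hp1'mem, hp1'ne⟩ := hfree p1 hp1S
          obtain ⟨q1', hq1'S, hq1'mem, hq1'ne⟩ := hfree q1 hq1S
          have hq1'notin : q1' - a ∉ Submodule.span ℝ {p1 - a} := by
            intro hin
            obtain ⟨c, hc⟩ := Submodule.mem_span_singleton.1 hq1'mem
            have hcne : c ≠ 0 := by
              intro h0
              rw [h0, zero_smul] at hc
              exact hnz q1' hq1'S hc.symm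
            apply hq1
            have : q1 - a = c⁻¹ • (q1' - a) := by
              rw [← hc, smul_smul, inv_mul_cancel₀ hcne, one_smul]
            rw [this]
            exact Submodule.smul_mem _ _ hin
          have hp1q1 : p1 ≠ q1 := by
            intro h
            exact hq1 (h ▸ Submodule.mem_span_singleton_self (p1 - a))
          have hp1q1' : p1 ≠ q1' := by
            intro h
            exact hq1'notin (h ▸ Submodule.mem_span_singleton_self (p1 - a))
          have hp1'q1 : p1' ≠ q1 := by
            intro h
            exact hq1 (h ▸ hp1'mem)
          have hp1'q1' : p1' ≠ q1' := by
            intro h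
            exact hq1'notin (h ▸ hp1'mem)
          have hli : LinearIndependent ℝ ![q1 - a, p1 - a] :=
            linearIndependent_fin2.2 ⟨hp1ne,
              fun c hc => hq1 (Submodule.mem_span_singleton.2 ⟨c, hc⟩)⟩
          set U := Submodule.span ℝ ({q1 - a, p1 - a} : Set (EuclideanSpace ℝ (Fin d))) with hU
          have hrkU : Module.finrank ℝ U = 2 := by
            have hrange : Set.range ![q1 - a, p1 - a] = {q1 - a, p1 - a} := by
              rw [Set.pair_comm]
              simp [Matrix.range_cons, Matrix.range_empty]
            rw [hU, ← hrange, finrank_span_eq_card hli]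
            simp
          have hspanp : Submodule.span ℝ ({p1 - a} : Set (EuclideanSpace ℝ (Fin d))) ≤ U :=
            Submodule.span_mono (Set.singleton_subset_iff.2 (Set.mem_insert_of_mem _ rfl))
          have hspanq : Submodule.span ℝ ({q1 - a} : Set (EuclideanSpace ℝ (Fin d))) ≤ U :=
            Submodule.span_mono (Set.singleton_subset_iff.2 (Set.mem_insert _ _))
          refine gp_bound hgen 2 (by omega) (by omega) a U hrkU {p1, p1', q1, q1'} ?_ ?_ ?_
          · intro y hy
            simp only [Finset.mem_insert, Finset.mem_singleton] at hy
            rcases hy with rfl | rfl | rfl | rfl <;> assumption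
          · intro y hy
            simp only [Finset.mem_insert, Finset.mem_singleton] at hy
            rcases hy with rfl | rfl | rfl | rfl
            · exact hspanp (Submodule.mem_span_singleton_self _)
            · exact hspanp hp1'mem
            · exact hspanq (Submodule.mem_span_singleton_self _)
            · exact hspanq hq1'mem
          · rw [Finset.card_insert_of_notMem
                (by simp [Ne.symm hp1'ne, hp1q1, hp1q1']),
              Finset.card_insert_of_notMem (by simp [hp1'q1, hp1'q1']),
              Finset.card_insert_of_notMem (by simp [Ne.symm hq1'ne]), Finset.card_singleton]
            norm_num
end

section
/- Every set S of four distinct points in ℝ² is a win for Alice: there exists a winning point for Alice. -/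
open scoped RealInnerProductSpace

section aux
variable {E : Type*}

/-- Split a sum over `S` into the parts where `c > 0` and `c < 0`, provided the summand
vanishes where `c = 0`. -/
lemma my_split_sum {M : Type*} [AddCommMonoid M] (S : Finset E) (c : E → ℝ) (f : E → M)
    (hf : ∀ x ∈ S, c x = 0 → f x = 0) :
    ∑ x ∈ S.filter (fun x => 0 < c x), f x + ∑ x ∈ S.filter (fun x => c x < 0), f x
      = ∑ x ∈ S, f x := by
  classical
  rw [← Finset.sum_filter_add_sum_filter_not S (fun x => 0 < c x) f]
  congr 1
  rw [← Finset.sum_filter_add_sum_filter_not (S.filter (fun x => ¬ 0 < c x)) (fun x => c x < 0) f]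
  rw [Finset.filter_filter, Finset.filter_filter]
  have h1 : S.filter (fun x => ¬ 0 < c x ∧ c x < 0) = S.filter (fun x => c x < 0) := by
    apply Finset.filter_congr
    intro x _
    constructor
    · rintro ⟨_, h⟩; exact h
    · intro h; exact ⟨not_lt.mpr h.le, h⟩
  have h2 : ∑ x ∈ S.filter (fun x => ¬ 0 < c x ∧ ¬ c x < 0), f x = 0 := by
    apply Finset.sum_eq_zero
    intro x hx
    rw [Finset.mem_filter] at hx
    exact hf x hx.1 (le_antisymm (not_lt.mp hx.2.1) (not_lt.mp hx.2.2))
  rw [h1, h2, add_zero]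

end aux


/-- every set of four distinct points in `ℝ²` is a win for Alice. -/
theorem stmt17 (S : Finset (EuclideanSpace ℝ (Fin 2))) (hcard : S.card = 4) :
    ∃ a : EuclideanSpace ℝ (Fin 2), IsWinningPoint S a := by
  classical
  have hfr : Module.finrank ℝ (EuclideanSpace ℝ (Fin 2)) + 1 < S.card := by
    rw [finrank_euclideanSpace_fin, hcard]; norm_num
  obtain ⟨c, hvec, hsum, x₀, hx₀S, hx₀⟩ :=
    Module.exists_nontrivial_relation_sum_zero_of_finrank_succ_lt_card hfr
  set P : Finset (EuclideanSpace ℝ (Fin 2)) := S.filter (fun x => 0 < c x) with hP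
  set N : Finset (EuclideanSpace ℝ (Fin 2)) := S.filter (fun x => c x < 0) with hN
  set s : ℝ := ∑ x ∈ P, c x with hs
  -- split the two relations
  have hsplit_c : (∑ x ∈ P, c x) + (∑ x ∈ N, c x) = 0 := by
    rw [my_split_sum S c c (fun x _ h => h)]; exact hsum
  have hsplit_v : (∑ x ∈ P, c x • x) + (∑ x ∈ N, c x • x) = 0 := by
    rw [my_split_sum S c (fun x => c x • x) (fun x _ h => by show c x • x = 0; rw [h, zero_smul])]; exact hvec
  -- P and N are nonempty
  have hPN : P.Nonempty ∧ N.Nonempty := by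
    have hx : x₀ ∈ P ∨ x₀ ∈ N := by
      rcases lt_or_gt_of_ne hx₀ with h | h
      · exact Or.inr (Finset.mem_filter.mpr ⟨hx₀S, h⟩)
      · exact Or.inl (Finset.mem_filter.mpr ⟨hx₀S, h⟩)
    have hPpos : ∀ x ∈ P, 0 < c x := fun x hx => (Finset.mem_filter.mp hx).2
    have hNneg : ∀ x ∈ N, c x < 0 := fun x hx => (Finset.mem_filter.mp hx).2
    rcases hx with h | h
    · refine ⟨⟨x₀, h⟩, ?_⟩
      by_contra hNe
      rw [Finset.not_nonempty_iff_eq_empty] at hNe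
      rw [hNe, Finset.sum_empty, add_zero] at hsplit_c
      have : 0 < ∑ x ∈ P, c x := Finset.sum_pos hPpos ⟨x₀, h⟩
      linarith
    · refine ⟨?_, ⟨x₀, h⟩⟩
      by_contra hPe
      rw [Finset.not_nonempty_iff_eq_empty] at hPe
      rw [hPe, Finset.sum_empty, zero_add] at hsplit_c
      have : (∑ x ∈ N, c x) < 0 := Finset.sum_neg hNneg ⟨x₀, h⟩
      linarith
  obtain ⟨hPne, hNne⟩ := hPN
  have hspos : 0 < s := Finset.sum_pos (fun x hx => (Finset.mem_filter.mp hx).2) hPne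
  have hsN : ∑ x ∈ N, c x = -s := by linarith [hs, hsplit_c]
  set a : EuclideanSpace ℝ (Fin 2) := s⁻¹ • ∑ x ∈ P, c x • x with ha
  have haP : ∑ x ∈ P, c x • x = s • a := by
    rw [ha, smul_smul, mul_inv_cancel₀ hspos.ne', one_smul]
  have haN : ∑ x ∈ N, c x • x = -(s • a) := by
    rw [← haP]; linear_combination (norm := module) hsplit_v
  refine ⟨a, ?_⟩
  intro b
  by_cases hb : b = a
  · subst hb; exact le_refl _
  -- the affine function L
  set L : EuclideanSpace ℝ (Fin 2) → ℝ :=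
    fun z => ‖b‖ ^ 2 - ‖a‖ ^ 2 - 2 * ⟪b - a, z⟫ with hL
  have hiff : ∀ u v : ℝ, 0 ≤ u → 0 ≤ v → (u < v ↔ u ^ 2 < v ^ 2) :=
    fun u v hu hv => (pow_lt_pow_iff_left₀ hu hv two_ne_zero).symm
  have hLdist : ∀ z : EuclideanSpace ℝ (Fin 2),
      (dist a z < dist b z ↔ 0 < L z) ∧ (dist b z < dist a z ↔ L z < 0) := by
    intro z
    have h1 : dist a z = ‖a - z‖ := dist_eq_norm a z
    have h2 : dist b z = ‖b - z‖ := dist_eq_norm b z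
    have e1 : ‖a - z‖ ^ 2 = ‖a‖ ^ 2 - 2 * ⟪a, z⟫ + ‖z‖ ^ 2 := norm_sub_sq_real a z
    have e2 : ‖b - z‖ ^ 2 = ‖b‖ ^ 2 - 2 * ⟪b, z⟫ + ‖z‖ ^ 2 := norm_sub_sq_real b z
    have e3 : ⟪b - a, z⟫ = ⟪b, z⟫ - ⟪a, z⟫ := inner_sub_left b a z
    have hLz : L z = ‖b - z‖ ^ 2 - ‖a - z‖ ^ 2 := by
      simp only [hL]; rw [e1, e2, e3]; ring
    have ha' : dist a z < dist b z ↔ ‖a - z‖ ^ 2 < ‖b - z‖ ^ 2 := by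
      rw [h1, h2]; exact hiff _ _ (norm_nonneg _) (norm_nonneg _)
    have hb' : dist b z < dist a z ↔ ‖b - z‖ ^ 2 < ‖a - z‖ ^ 2 := by
      rw [h1, h2]; exact hiff _ _ (norm_nonneg _) (norm_nonneg _)
    rw [ha', hb', hLz]
    constructor <;> constructor <;> intro h <;> linarith
  -- L a = ‖b - a‖² > 0
  have hLa : 0 < L a := by
    have e : ‖b - a‖ ^ 2 = ‖b‖ ^ 2 - 2 * ⟪b, a⟫ + ‖a‖ ^ 2 := norm_sub_sq_real b a
    have e3 : ⟪b - a, a⟫ = ⟪b, a⟫ - ⟪a, a⟫ := inner_sub_left b a a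
    have e4 : ⟪a, a⟫ = ‖a‖ ^ 2 := real_inner_self_eq_norm_sq a
    have hba : 0 < ‖b - a‖ := by
      rw [norm_pos_iff, sub_ne_zero]; exact hb
    have : L a = ‖b - a‖ ^ 2 := by simp only [hL]; rw [e3, e4, e]; ring
    rw [this]; positivity
  -- sums of c * L over P and N
  have key : ∀ (T : Finset (EuclideanSpace ℝ (Fin 2))) (t : ℝ),
      (∑ x ∈ T, c x = t) → (∑ x ∈ T, c x • x = t • a) →
      ∑ x ∈ T, c x * L x = t * L a := by
    intro T t hT1 hT2
    have : ∑ x ∈ T, c x * L x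
        = (∑ x ∈ T, c x) * (‖b‖ ^ 2 - ‖a‖ ^ 2) - 2 * ⟪b - a, ∑ x ∈ T, c x • x⟫ := by
      rw [inner_sum, Finset.sum_mul, Finset.mul_sum, ← Finset.sum_sub_distrib]
      apply Finset.sum_congr rfl
      intro x _
      simp only [hL]
      rw [real_inner_smul_right]
      ring
    rw [this, hT1, hT2, real_inner_smul_right]
    simp only [hL]
    ring
  have hsumP : ∑ x ∈ P, c x * L x = s * L a := key P s rfl haP
  have hsumN : ∑ x ∈ N, c x * L x = -s * L a := by
    have := key N (-s) hsN (by rw [neg_smul]; exact haN)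
    linarith
  -- there is a point with L > 0 in P and in N
  have hxP : ∃ x ∈ P, 0 < L x := by
    by_contra h
    push_neg at h
    have : ∑ x ∈ P, c x * L x ≤ 0 := by
      apply Finset.sum_nonpos
      intro x hx
      exact mul_nonpos_of_nonneg_of_nonpos (Finset.mem_filter.mp hx).2.le (h x hx)
    have := mul_pos hspos hLa
    linarith
  have hyN : ∃ y ∈ N, 0 < L y := by
    by_contra h
    push_neg at h
    have : 0 ≤ ∑ x ∈ N, c x * L x := by
      apply Finset.sum_nonneg
      intro x hx
      nlinarith [(Finset.mem_filter.mp hx).2.le, h x hx]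
    have := mul_pos hspos hLa
    nlinarith
  obtain ⟨x, hxPmem, hxL⟩ := hxP
  obtain ⟨y, hyNmem, hyL⟩ := hyN
  have hxy : x ≠ y := by
    intro h
    have h1 := (Finset.mem_filter.mp hxPmem).2
    have h2 := (Finset.mem_filter.mp hyNmem).2
    rw [h] at h1; linarith
  -- counting
  have hfilter_a : S.filter (fun z => dist a z < dist b z) = S.filter (fun z => 0 < L z) := by
    apply Finset.filter_congr
    intro z _
    exact (hLdist z).1
  have hfilter_b : S.filter (fun z => dist b z < dist a z) = S.filter (fun z => L z < 0) := by
    apply Finset.filter_congr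
    intro z _
    exact (hLdist z).2
  have h2le : 2 ≤ (S.filter (fun z => 0 < L z)).card := by
    have h1 : 1 < (S.filter (fun z => 0 < L z)).card :=
      Finset.one_lt_card.mpr ⟨x, Finset.mem_filter.mpr ⟨(Finset.mem_filter.mp hxPmem).1, hxL⟩,
        y, Finset.mem_filter.mpr ⟨(Finset.mem_filter.mp hyNmem).1, hyL⟩, hxy⟩
    omega
  have hsub : S.filter (fun z => L z < 0) ⊆ S \ S.filter (fun z => 0 < L z) := by
    intro z hz
    rw [Finset.mem_filter] at hz
    rw [Finset.mem_sdiff, Finset.mem_filter]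
    exact ⟨hz.1, fun h => absurd h.2 (not_lt.mpr hz.2.le)⟩
  have hle : (S.filter (fun z => L z < 0)).card ≤ 4 - (S.filter (fun z => 0 < L z)).card := by
    calc (S.filter (fun z => L z < 0)).card
        ≤ (S \ S.filter (fun z => 0 < L z)).card := Finset.card_le_card hsub
      _ = S.card - (S.filter (fun z => 0 < L z)).card :=
          Finset.card_sdiff_of_subset (Finset.filter_subset _ _)
      _ = 4 - (S.filter (fun z => 0 < L z)).card := by rw [hcard]
  unfold claims
  rw [hfilter_a, hfilter_b]
  omega
end

section
/- Let S be a set of d+1 distinct points in ℝ^d that are pairwise equidistant (the vertices of a regular d-dimensional simplex). Then for every a ∈ ℝ^d there exists b ∈ ℝ^d with b ≠ a such that V_B(a,b) ≥ d. In particular, Alice can never claim more than a proportion 1/(d+1) of the voters against a best response of Bob. -/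
open scoped RealInnerProductSpace

set_option maxHeartbeats 1000000

section Aux

variable {d : ℕ}

/-- Pairwise equidistant points are affinely independent. -/
lemma equidist_affineIndependent {ι : Type*} [Fintype ι]
    (p : ι → EuclideanSpace ℝ (Fin d)) (r : ℝ) (hr : 0 < r)
    (h : ∀ i j, i ≠ j → dist (p i) (p j) = r) : AffineIndependent ℝ p := by
  classical
  rcases isEmpty_or_nonempty ι with hι | hι
  · exact affineIndependent_of_subsingleton ℝ p
  obtain ⟨i₀⟩ := hι
  rw [affineIndependent_iff_linearIndependent_vsub ℝ p i₀]
  rw [Fintype.linearIndependent_iff]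
  intro g hg
  set v : {x // x ≠ i₀} → EuclideanSpace ℝ (Fin d) := fun i => p ↑i -ᵥ p i₀ with hv
  have hnorm : ∀ i : {x // x ≠ i₀}, ‖v i‖ = r := by
    intro i
    rw [hv]
    show ‖p ↑i -ᵥ p i₀‖ = r
    rw [vsub_eq_sub, ← dist_eq_norm]
    exact h i i₀ i.2
  have hinner : ∀ i j : {x // x ≠ i₀},
      ⟪v j, v i⟫ = r ^ 2 / 2 + (if i = j then r ^ 2 / 2 else 0) := by
    intro i j
    by_cases hij : i = j
    · subst hij
      rw [real_inner_self_eq_norm_sq, hnorm i, if_pos rfl]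
      ring
    · have hd : v j - v i = p ↑j - p ↑i := by
        show (p ↑j -ᵥ p i₀) - (p ↑i -ᵥ p i₀) = p ↑j - p ↑i
        rw [vsub_eq_sub, vsub_eq_sub]; abel
      have hvd : ‖v j - v i‖ = r := by
        rw [hd, ← dist_eq_norm]
        exact h j i (fun e => hij (Subtype.ext e).symm)
      have h1 : ‖v j - v i‖ ^ 2 = ‖v j‖ ^ 2 - 2 * ⟪v j, v i⟫ + ‖v i‖ ^ 2 :=
        norm_sub_sq_real (v j) (v i)
      rw [hvd, hnorm i, hnorm j] at h1
      have h2 : ⟪v j, v i⟫ = r ^ 2 / 2 := by linarith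
      rw [h2, if_neg hij, add_zero]
  have key : ∀ j : {x // x ≠ i₀}, g j = -(∑ i, g i) := by
    intro j
    have h0 : (∑ i, g i * ⟪v j, v i⟫) = 0 := by
      have h0' : ⟪v j, ∑ i, g i • v i⟫ = (0 : ℝ) := by rw [hg, inner_zero_right]
      rw [inner_sum] at h0'
      simp only [real_inner_smul_right] at h0'
      exact h0'
    simp only [hinner] at h0
    rw [Finset.sum_congr rfl (fun i _ => mul_add (g i) _ _), Finset.sum_add_distrib] at h0
    have h1 : ∑ i, g i * (if i = j then r ^ 2 / 2 else 0) = g j * (r ^ 2 / 2) := by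
      simp only [mul_ite, mul_zero, Finset.sum_ite_eq', Finset.mem_univ, if_true]
    rw [h1, ← Finset.sum_mul] at h0
    have hr2 : (0 : ℝ) < r ^ 2 / 2 := by positivity
    have h3 : ((∑ i, g i) + g j) * (r ^ 2 / 2) = 0 := by linarith
    have h4 := (mul_eq_zero.1 h3).resolve_right (ne_of_gt hr2)
    linarith
  have hsum : (∑ i, g i) = 0 := by
    set C : ℝ := ∑ i, g i with hC
    have h5 : C = (Finset.univ.card (α := {x // x ≠ i₀}) : ℝ) * (-C) := by
      conv_lhs => rw [hC, Finset.sum_congr rfl (fun i _ => key i)]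
      rw [Finset.sum_const, nsmul_eq_mul]
    have h6 : (1 + (Finset.univ.card (α := {x // x ≠ i₀}) : ℝ)) * C = 0 := by
      linear_combination h5
    have h7 : (0 : ℝ) < 1 + (Finset.univ.card (α := {x // x ≠ i₀}) : ℝ) := by
      have h8 : (0 : ℝ) ≤ (Finset.univ.card (α := {x // x ≠ i₀}) : ℝ) := Nat.cast_nonneg _
      linarith
    exact (mul_eq_zero.1 h6).resolve_left (ne_of_gt h7)
  intro j
  rw [key j, hsum, neg_zero]

/-- Uniqueness of barycentric weights over an affinely independent finset. -/
lemma weights_unique (S : Finset (EuclideanSpace ℝ (Fin d)))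
    (hAI : AffineIndependent ℝ ((↑) : ↥S → EuclideanSpace ℝ (Fin d)))
    (w u : EuclideanSpace ℝ (Fin d) → ℝ)
    (hw : ∑ y ∈ S, w y = 1) (hu : ∑ y ∈ S, u y = 1)
    (hwa : ∑ y ∈ S, w y • y = ∑ y ∈ S, u y • y) : ∀ y ∈ S, w y = u y := by
  rw [affineIndependent_iff] at hAI
  have hs0 : (∑ i : ↥S, (w ↑i - u ↑i)) = 0 := by
    have h := Finset.sum_coe_sort S (fun y => w y - u y)
    rw [h, Finset.sum_sub_distrib, hw, hu, sub_self]
  have hsv : (∑ i : ↥S, (w ↑i - u ↑i) • (i : EuclideanSpace ℝ (Fin d))) = 0 := by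
    have h := Finset.sum_coe_sort S (fun y => (w y - u y) • y)
    rw [h]
    simp only [sub_smul, Finset.sum_sub_distrib, hwa, sub_self]
  have h := hAI Finset.univ (fun i => w ↑i - u ↑i) hs0 hsv
  intro y hy
  have := h ⟨y, hy⟩ (Finset.mem_univ _)
  simpa [sub_eq_zero] using this

/-- Some facet of the simplex misses `a`. -/
lemma exists_facet_not_mem [DecidableEq (EuclideanSpace ℝ (Fin d))]
    (S : Finset (EuclideanSpace ℝ (Fin d))) (hS : S.Nonempty)
    (hAI : AffineIndependent ℝ ((↑) : ↥S → EuclideanSpace ℝ (Fin d)))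
    (a : EuclideanSpace ℝ (Fin d)) :
    ∃ x ∈ S, a ∉ convexHull ℝ (↑(S.erase x) : Set (EuclideanSpace ℝ (Fin d))) := by
  by_contra hcon
  push_neg at hcon
  have hW : ∀ x ∈ S, ∃ W : EuclideanSpace ℝ (Fin d) → ℝ,
      W x = 0 ∧ ∑ y ∈ S, W y = 1 ∧ ∑ y ∈ S, W y • y = a := by
    intro x hx
    have hmem := hcon x hx
    rw [Finset.convexHull_eq] at hmem
    obtain ⟨w, _, hw1, hwc⟩ := hmem
    rw [Finset.centerMass_eq_of_sum_1 _ id hw1] at hwc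
    refine ⟨fun y => if y = x then 0 else w y, by simp, ?_, ?_⟩
    · rw [← Finset.add_sum_erase S _ hx]
      beta_reduce
      rw [if_pos rfl, zero_add, ← hw1]
      refine Finset.sum_congr rfl fun y hy => ?_
      rw [if_neg (Finset.ne_of_mem_erase hy)]
    · rw [← Finset.add_sum_erase S _ hx]
      beta_reduce
      rw [if_pos rfl, zero_smul, zero_add, ← hwc]
      refine Finset.sum_congr rfl fun y hy => ?_
      rw [if_neg (Finset.ne_of_mem_erase hy)]
      simp
  obtain ⟨x₀, hx₀⟩ := hS
  obtain ⟨W₀, _, hW₀1, hW₀a⟩ := hW x₀ hx₀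
  have hzero : ∀ x ∈ S, W₀ x = 0 := by
    intro x hx
    obtain ⟨Wx, hWx0, hWx1, hWxa⟩ := hW x hx
    have := weights_unique S hAI W₀ Wx hW₀1 hWx1 (by rw [hW₀a, hWxa])
    rw [this x hx, hWx0]
  rw [Finset.sum_congr rfl hzero] at hW₀1
  simp at hW₀1

end Aux

/-- if `S` consists of `d + 1` pairwise equidistant points in `ℝ^d` (the vertices
of a regular simplex), then for every `a` Bob has a reply `b ≠ a` with `V_B(a,b) ≥ d`; in
particular Alice claims at most `|S|/(d+1)` of the voters, i.e. `(d+1)·V_A(a,b) ≤ |S|`. -/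
theorem stmt18 (d : ℕ) (hd : 1 ≤ d) (S : Finset (EuclideanSpace ℝ (Fin d)))
    (hcard : S.card = d + 1)
    (hequi : ∃ r : ℝ, 0 < r ∧ ∀ x ∈ S, ∀ y ∈ S, x ≠ y → dist x y = r) :
    ∀ a : EuclideanSpace ℝ (Fin d), ∃ b : EuclideanSpace ℝ (Fin d),
      b ≠ a ∧ d ≤ claims S b a ∧ (d + 1) * claims S a b ≤ S.card := by
  classical
  intro a
  obtain ⟨r, hr, hre⟩ := hequi
  have hAI : AffineIndependent ℝ ((↑) : ↥S → EuclideanSpace ℝ (Fin d)) :=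
    equidist_affineIndependent _ r hr fun i j hij =>
      hre i i.2 j j.2 (fun e => hij (Subtype.ext e))
  have hS : S.Nonempty := Finset.card_pos.1 (by omega)
  obtain ⟨x₀, hx₀S, hx₀⟩ := exists_facet_not_mem S hS hAI a
  set F := S.erase x₀ with hF
  have hFcard : F.card = d := by rw [hF, Finset.card_erase_of_mem hx₀S, hcard]; omega
  obtain ⟨f, u, hfa, hfF⟩ := geometric_hahn_banach_point_closed
    (convex_convexHull ℝ _) (F.finite_toSet.isClosed_convexHull (𝕜 := ℝ)) hx₀
  set v := (InnerProductSpace.toDual ℝ (EuclideanSpace ℝ (Fin d))).symm f with hvdef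
  have hvf : ∀ y, ⟪v, y⟫ = f y := fun y => InnerProductSpace.toDual_symm_apply
  set δ := u - f a with hδdef
  have hδ : 0 < δ := sub_pos.2 hfa
  have hxv : ∀ x ∈ F, δ < ⟪v, x - a⟫ := by
    intro x hxF
    have hfx : u < f x := hfF x (subset_convexHull ℝ _ (Finset.mem_coe.2 hxF))
    rw [inner_sub_right, hvf, hvf]
    rw [hδdef]
    linarith
  have hvne : v ≠ 0 := by
    obtain ⟨x, hxF⟩ : F.Nonempty := Finset.card_pos.1 (by omega)
    intro hv0
    have := hxv x hxF
    rw [hv0, inner_zero_left] at this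
    linarith
  set t : ℝ := δ / ‖v‖ ^ 2 with htdef
  have hvnorm : 0 < ‖v‖ ^ 2 := pow_pos (norm_pos_iff.2 hvne) 2
  have ht : 0 < t := div_pos hδ hvnorm
  have hcloser : ∀ x ∈ F, dist (a + t • v) x < dist a x := by
    intro x hxF
    have hsq : dist (a + t • v) x ^ 2 < dist a x ^ 2 := by
      have h1 : dist (a + t • v) x ^ 2 = ‖(a - x) + t • v‖ ^ 2 := by
        rw [dist_eq_norm]; congr 1; abel
      rw [h1, norm_add_sq_real, dist_eq_norm]
      have h2 : ⟪a - x, t • v⟫ = t * ⟪v, a - x⟫ := by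
        rw [real_inner_smul_right, real_inner_comm]
      have h3 : ⟪v, a - x⟫ = -⟪v, x - a⟫ := by
        rw [← inner_neg_right]; congr 1; abel
      have h4 : ‖t • v‖ ^ 2 = t * (t * ‖v‖ ^ 2) := by
        rw [norm_smul, Real.norm_eq_abs, abs_of_pos ht]; ring
      have h5 : t * ‖v‖ ^ 2 = δ := by
        rw [htdef, div_mul_cancel₀]
        exact ne_of_gt hvnorm
      have h6 := hxv x hxF
      rw [h2, h3, h4, h5]
      nlinarith [mul_pos ht (sub_pos.2 h6), mul_pos ht hδ]
    exact lt_of_pow_lt_pow_left₀ 2 dist_nonneg hsq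
  refine ⟨a + t • v, ?_, ?_, ?_⟩
  · intro h
    have htv : t • v = 0 := by
      have := congrArg (· - a) h
      simpa using this
    rcases smul_eq_zero.1 htv with h' | h'
    · exact absurd h' (ne_of_gt ht)
    · exact hvne h'
  · have hsub : F ⊆ S.filter fun x => dist (a + t • v) x < dist a x := by
      intro x hxF
      exact Finset.mem_filter.2 ⟨Finset.mem_of_mem_erase hxF, hcloser x hxF⟩
    calc d = F.card := hFcard.symm
      _ ≤ _ := Finset.card_le_card hsub
  · have hsub : (S.filter fun x => dist a x < dist (a + t • v) x) ⊆ {x₀} := by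
      intro x hx
      obtain ⟨hxS, hxd⟩ := Finset.mem_filter.1 hx
      rw [Finset.mem_singleton]
      by_contra hne
      exact absurd (hcloser x (Finset.mem_erase.2 ⟨hne, hxS⟩)) (asymm hxd)
    have hone : claims S a (a + t • v) ≤ 1 := by
      calc claims S a (a + t • v) ≤ ({x₀} : Finset _).card := Finset.card_le_card hsub
        _ = 1 := Finset.card_singleton x₀
    calc (d + 1) * claims S a (a + t • v) ≤ (d + 1) * 1 := Nat.mul_le_mul_left _ hone
      _ = S.card := by rw [hcard]; ring
end

section
/- For every finite set S of points in ℝ^d there exists a point a ∈ ℝ^d such that for every b ∈ ℝ^d with b ≠ a, Alice claims at least a proportion 1/(d+1) of the voters: (d+1)·|{x ∈ S : ‖a−x‖ < ‖b−x‖}| ≥ |S|. -/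
open scoped RealInnerProductSpace

/-- for every finite set `S` of voters in `ℝ^d` there is a point `a` such that,
against any `b ≠ a`, Alice claims at least a proportion `1/(d+1)` of the voters:
`(d+1)·V_A(a,b) ≥ |S|`. -/
theorem stmt19 (d : ℕ) (hd : 1 ≤ d) (S : Finset (EuclideanSpace ℝ (Fin d))) :
    ∃ a : EuclideanSpace ℝ (Fin d), ∀ b : EuclideanSpace ℝ (Fin d), b ≠ a →
      S.card ≤ (d + 1) * claims S a b := by
  classical
  rcases S.eq_empty_or_nonempty with rfl | hS
  · exact ⟨0, fun b _ => by simp [claims]⟩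
  have dummyE : True := trivial
  set n := S.card with hn
  have hn1 : 1 ≤ n := Finset.card_pos.mpr hS
  set s : Finset (Finset (EuclideanSpace ℝ (Fin d))) :=
    S.powerset.filter (fun T => d * n < (d + 1) * T.card) with hsdef
  have hmem : ∀ T ∈ s, T ⊆ S ∧ d * n < (d + 1) * T.card := by
    intro T hT
    simpa [hsdef, Finset.mem_powerset] using hT
  have hHelly : (⋂ T ∈ s, convexHull ℝ (T : Set (EuclideanSpace ℝ (Fin d)))).Nonempty := by
    apply Convex.helly_theorem' (𝕜 := ℝ)
    · intro T _; exact convex_convexHull ℝ _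
    · intro I hI hIcard
      rw [finrank_euclideanSpace_fin] at hIcard
      have key : ∀ T ∈ I, (d + 1) * (S \ T).card ≤ n - 1 := by
        intro T hT
        obtain ⟨hTS, hT2⟩ := hmem T (hI hT)
        have ht : T.card ≤ n := Finset.card_le_card hTS
        rw [Finset.card_sdiff_of_subset hTS]
        have hdu : d * (n - T.card) < T.card := by
          have h5 : d * (n - T.card) + d * T.card < d * T.card + T.card := by
            calc d * (n - T.card) + d * T.card = d * n := by
                  rw [← Nat.mul_add, Nat.sub_add_cancel ht]
              _ < (d + 1) * T.card := hT2
              _ = d * T.card + T.card := by ring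
          rw [Nat.add_comm] at h5
          exact Nat.lt_of_add_lt_add_left h5
        have hE : (d + 1) * (n - T.card) = d * (n - T.card) + (n - T.card) := by ring
        rw [hE]
        generalize d * (n - T.card) = x at hdu ⊢
        omega
      set B := I.biUnion (fun T => S \ T) with hB
      have hBS : B ⊆ S := by
        intro x hx
        obtain ⟨T, _, hx⟩ := Finset.mem_biUnion.mp hx
        exact (Finset.mem_sdiff.mp hx).1
      have hBcard : B.card < n := by
        have h1 : B.card ≤ ∑ T ∈ I, (S \ T).card := Finset.card_biUnion_le
        have h2 : (d + 1) * ∑ T ∈ I, (S \ T).card ≤ I.card * (n - 1) := by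
          rw [Finset.mul_sum]
          calc ∑ T ∈ I, (d + 1) * (S \ T).card ≤ ∑ T ∈ I, (n - 1) :=
                Finset.sum_le_sum key
            _ = I.card * (n - 1) := by rw [Finset.sum_const, smul_eq_mul]
        have h3 : I.card * (n - 1) ≤ (d + 1) * (n - 1) :=
          Nat.mul_le_mul_right _ hIcard
        have h4 : (d + 1) * ∑ T ∈ I, (S \ T).card < (d + 1) * n :=
          lt_of_le_of_lt (le_trans h2 h3)
            (mul_lt_mul_of_pos_left (by omega) (by omega))
        have h5 : ∑ T ∈ I, (S \ T).card < n :=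
          Nat.lt_of_mul_lt_mul_left h4
        omega
      have hx : (S \ B).Nonempty := by
        rw [Finset.sdiff_nonempty]
        intro hSB
        exact absurd (Finset.card_le_card hSB) (by omega)
      obtain ⟨x, hx⟩ := hx
      rw [Finset.mem_sdiff] at hx
      refine ⟨x, Set.mem_iInter₂.mpr fun T hT => ?_⟩
      apply subset_convexHull
      have hxT : x ∈ T := by
        by_contra hxT
        exact hx.2 (Finset.mem_biUnion.mpr ⟨T, hT, Finset.mem_sdiff.mpr ⟨hx.1, hxT⟩⟩)
      exact hxT
  obtain ⟨a, ha⟩ := hHelly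
  refine ⟨a, fun b hb => ?_⟩
  by_contra hcon
  push_neg at hcon
  set T := S.filter (fun x => dist a x < dist b x) with hT
  have hclaims : claims S a b = T.card := rfl
  rw [hclaims] at hcon
  set M := S.filter (fun x => ¬ dist a x < dist b x) with hM
  have hsumcard : T.card + M.card = n :=
    Finset.card_filter_add_card_filter_not _
  have hMs : M ∈ s := by
    rw [hsdef, Finset.mem_filter, Finset.mem_powerset]
    refine ⟨Finset.filter_subset _ _, ?_⟩
    have e1 : (d + 1) * T.card + (d + 1) * M.card = (d + 1) * n := by
      rw [← Nat.mul_add, hsumcard]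
    have e2 : (d + 1) * n = d * n + n := by ring
    linarith [e1, e2, hcon]
  have haM : a ∈ convexHull ℝ (M : Set (EuclideanSpace ℝ (Fin d))) := Set.mem_iInter₂.mp ha M hMs
  have hhalf : convexHull ℝ (M : Set (EuclideanSpace ℝ (Fin d))) ⊆
      {x : EuclideanSpace ℝ (Fin d) | ⟪a - b, x⟫ ≤ (‖a‖ ^ 2 - ‖b‖ ^ 2) / 2} := by
    apply convexHull_min
    · intro x hxM
      simp only [Set.mem_setOf_eq]
      rw [Finset.mem_coe, hM, Finset.mem_filter] at hxM
      have hdist : dist b x ≤ dist a x := not_lt.mp hxM.2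
      have hsq : ‖b - x‖ ^ 2 ≤ ‖a - x‖ ^ 2 := by
        rw [← dist_eq_norm, ← dist_eq_norm]
        exact pow_le_pow_left₀ dist_nonneg hdist 2
      rw [norm_sub_sq_real, norm_sub_sq_real] at hsq
      rw [inner_sub_left]
      linarith
    · exact convex_halfSpace_le
        ⟨fun x y => inner_add_right _ _ _, fun r x => real_inner_smul_right _ _ _⟩ _
  have hfin := hhalf haM
  simp only [Set.mem_setOf_eq, inner_sub_left, real_inner_self_eq_norm_sq] at hfin
  have hba : (0:ℝ) < ‖b - a‖ ^ 2 :=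
    pow_pos (norm_pos_iff.mpr (sub_ne_zero.mpr hb)) 2
  rw [norm_sub_sq_real] at hba
  have hcomm : ⟪b, a⟫ = ⟪a, b⟫ := real_inner_comm _ _
  linarith
end
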